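/- arXiv:2003.08616 — 7 statements merged into one kernel-verified Lean document; each statement's English description precedes it below -/
import Mathlib

section
/- Let T be a standard tableau, s an entry of T, r an integer such that no entry of T lies in the open interval (r,s), and k ≤ s - r a positive integer. Choose integers r < r_1 < ... < r_{k-1} < s, and let T' be the tableau obtained from T by column-inserting r_{k-1}, r_{k-2}, ..., r_1 in that order. Then the column index of r_i in T' equals i for each 1 ≤ i ≤ k-1, and the column index of s in T' equals max(c_T(s), k), where c_T(s) is the column index of s in T. -/
/-- Column insertion of a value into a tableau represented as a list of columns
(each column a strictly increasing list, read top to bottom). The value bumps the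
smallest entry of the first column larger than it (or is appended at the bottom),
and any bumped entry is inserted into the next column. -/
def insertCol : ℕ → List (List ℕ) → List (List ℕ)
  | v, [] => [[v]]
  | v, c :: cs =>
    match c.find? (fun x => v < x) with
    | none => (c ++ [v]) :: cs
    | some x => (c.map fun y => if y = x then v else y) :: insertCol x cs

/-- Place the entry `i` at the bottom of the `j`-th column (0-based). -/
def placeAt (i : ℕ) : ℕ → List (List ℕ) → List (List ℕ)
  | 0, [] => [[i]]
  | 0, c :: cs => (c ++ [i]) :: cs
  | _ + 1, [] => [[i]]
  | j + 1, c :: cs => c :: placeAt i j cs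

/-- The shape of a tableau: the list of its column lengths. -/
def shapeOf (T : List (List ℕ)) : List ℕ := T.map List.length

/-- Index of the first position where two lists differ. -/
def diffIdx : List ℕ → List ℕ → ℕ
  | a :: as, b :: bs => if a = b then diffIdx as bs + 1 else 0
  | _, _ => 0

/-- The Robinson–Schensted pair `(P, Q)` of a word `w = [w 1, …, w n]` (one-line
notation): `P` is obtained by column inserting `w n, w (n-1), …, w 1` into the empty
tableau, and `Q` records, with entry `i`, the box added at the `i`-th insertion step. -/
def RSpair (w : List ℕ) : List (List ℕ) × List (List ℕ) :=
  (w.reverse.zipIdx.map Prod.swap).foldl (fun PQ p =>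
    let P' := insertCol p.2 PQ.1
    (P', placeAt (p.1 + 1) (diffIdx (shapeOf PQ.1) (shapeOf P')) PQ.2)) ([], [])

/-- The Robinson–Schensted `P`-symbol (insertion tableau) of a word. -/
def Psymb (w : List ℕ) : List (List ℕ) := (RSpair w).1

/-- The Robinson–Schensted `Q`-symbol (recording tableau) of a word. -/
def Qsymb (w : List ℕ) : List (List ℕ) := (RSpair w).2

/-- One-line notation (1-based values) of a permutation of `Fin n`. -/
def oneLine {n : ℕ} (w : Equiv.Perm (Fin n)) : List ℕ := List.ofFn fun i => (w i : ℕ) + 1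

/-- The `P`-symbol of a permutation. Two permutations of `S_n` lie in the same right
Kazhdan–Lusztig cell iff their `P`-symbols coincide. -/
def RSP {n : ℕ} (w : Equiv.Perm (Fin n)) : List (List ℕ) := Psymb (oneLine w)

/-- The `Q`-symbol of a permutation. Two permutations of `S_n` lie in the same left
Kazhdan–Lusztig cell iff their `Q`-symbols coincide. -/
def RSQ {n : ℕ} (w : Equiv.Perm (Fin n)) : List (List ℕ) := Qsymb (oneLine w)

/-- A list of columns is a standard tableau: columns are nonempty and strictly
increasing, column lengths weakly decrease, and rows strictly increase. -/
def ColsStandard (T : List (List ℕ)) : Prop :=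
  (∀ c ∈ T, c ≠ [] ∧ c.Pairwise (· < ·)) ∧
  T.Chain' (fun c c' => c'.length ≤ c.length ∧ ∀ i < c'.length, c.getD i 0 < c'.getD i 0)

/-- A standard Young tableau with `n` boxes: standard, with entries exactly `1, …, n`. -/
def IsSYT (n : ℕ) (T : List (List ℕ)) : Prop :=
  ColsStandard T ∧ T.flatten.Perm (List.range' 1 n)

/-- The (1-based) index of the column of `T` containing the entry `s`. -/
def colIndex (T : List (List ℕ)) (s : ℕ) : ℕ := T.findIdx (fun c => c.contains s) + 1

/-- The number of inversions `ℓ(f) = #{(i,j) : i < j, f i > f j}`. -/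
def invNum {N : ℕ} (f : Fin N → ℕ) : ℕ :=
  (Finset.univ.filter fun p : Fin N × Fin N => p.1 < p.2 ∧ f p.2 < f p.1).card

/-- Ehresmann's tableau (rank-matrix) characterisation of the Bruhat order, stated for
arbitrary functions: `f ≤ g` iff `#{i ≤ p : f i ≥ q} ≤ #{i ≤ p : g i ≥ q}` for all `p, q`. -/
def rankLE {N : ℕ} (f g : Fin N → ℕ) : Prop :=
  ∀ p q : ℕ,
    (Finset.univ.filter fun i : Fin N => (i : ℕ) ≤ p ∧ q ≤ f i).card ≤
      (Finset.univ.filter fun i : Fin N => (i : ℕ) ≤ p ∧ q ≤ g i).card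

/-- The Bruhat order on the symmetric group `S_N`. -/
def bruhatLE {N : ℕ} (x y : Equiv.Perm (Fin N)) : Prop :=
  rankLE (fun i => (x i : ℕ)) (fun i => (y i : ℕ))

/-- Equation (2.1) of Lanini–McNamara, in 0-based terms: given `x : Fin n → ℕ`
(0-based one-line values), produce the one-line values of `x' ∈ S_{n+t}`:
`x' i = k + i` for `i < t`; for `i ≥ t`, `x' i = x (i - t)` if `x (i - t) < k`
and `x' i = x (i - t) + t` otherwise. -/
def primeMap (n t k : ℕ) (x : Fin n → ℕ) : Fin (n + t) → ℕ := fun i =>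
  if _h : (i : ℕ) < t then k + i
  else
    have hi : (i : ℕ) - t < n := by omega
    if x ⟨(i : ℕ) - t, hi⟩ < k then x ⟨(i : ℕ) - t, hi⟩ else x ⟨(i : ℕ) - t, hi⟩ + t

namespace ColIns

def Low (r : ℕ) (L : List ℕ) : Prop := ∀ x ∈ L, x ≤ r
def High (s : ℕ) (H : List ℕ) : Prop := (∀ x ∈ H, s ≤ x) ∧ H.Pairwise (· ≤ ·)
def LH (r s : ℕ) (c : List ℕ) : Prop := ∃ L H, c = L ++ H ∧ Low r L ∧ High s H
def GC (r s g : ℕ) (c : List ℕ) : Prop :=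
  ∃ L n H, c = L ++ List.replicate (n+1) g ++ H ∧ Low r L ∧ High s H

lemma high_nil (s : ℕ) : High s [] := ⟨by simp, by simp⟩
lemma LH_nil (r s : ℕ) : LH r s [] := ⟨[], [], by simp, by simp [Low], high_nil s⟩

lemma insertCol_cons_none {v : ℕ} {c : List ℕ} {cs : List (List ℕ)}
    (h : c.find? (fun x => v < x) = none) :
    insertCol v (c :: cs) = (c ++ [v]) :: cs := by
  simp [insertCol, h]

lemma insertCol_cons_some {v x : ℕ} {c : List ℕ} {cs : List (List ℕ)}
    (h : c.find? (fun x => v < x) = some x) :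
    insertCol v (c :: cs) = (c.map fun y => if y = x then v else y) :: insertCol x cs := by
  simp [insertCol, h]

lemma find?_low_append {r : ℕ} (v : ℕ) (hv : r < v) {L : List ℕ} (hL : Low r L) (H : List ℕ) :
    (L ++ H).find? (fun x => v < x) = H.find? (fun x => v < x) := by
  rw [List.find?_append]
  have h : L.find? (fun x => v < x) = none := by
    rw [List.find?_eq_none]
    intro x hx
    have := hL x hx
    simp only [decide_eq_true_eq]
    omega
  simp [h]

lemma find?_all_head {p : ℕ → Bool} {H : List ℕ} (h : ∀ x ∈ H, p x) :
    H.find? p = H.head? := by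
  cases H with
  | nil => rfl
  | cons a t => rw [List.find?_cons_of_pos (h a (by simp))]; rfl

lemma find?_min {x : ℕ} : ∀ {H : List ℕ}, H.Pairwise (· ≤ ·) → ∀ {y : ℕ},
    H.find? (fun z => x < z) = some y → ∀ a ∈ H, x < a → y ≤ a := by
  intro H
  induction H with
  | nil => simp
  | cons b t ih =>
    intro hs y hf a ha hxa
    by_cases hb : x < b
    · rw [List.find?_cons_of_pos (by simpa using hb)] at hf
      cases hf
      rcases List.mem_cons.1 ha with rfl | ha
      · exact le_refl _
      · exact (List.pairwise_cons.1 hs).1 a ha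
    · rw [List.find?_cons_of_neg (by simpa using hb)] at hf
      rcases List.mem_cons.1 ha with rfl | ha
      · omega
      · exact ih hs.of_cons hf a ha hxa

lemma sorted_replace {H : List ℕ} (hs : H.Pairwise (· ≤ ·)) {x y : ℕ} (hxy : x < y)
    (hmin : ∀ a ∈ H, x < a → y ≤ a) :
    (H.map fun z => if z = y then x else z).Pairwise (· ≤ ·) := by
  rw [List.pairwise_map]
  refine hs.imp_of_mem ?_
  intro a b ha hb hab
  by_cases hay : a = y
  · by_cases hby : b = y
    · simp [hay, hby]
    · simp only [if_pos hay, if_neg hby]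
      subst hay
      omega
  · by_cases hby : b = y
    · simp only [if_neg hay, if_pos hby]
      by_contra h
      push_neg at h
      have h2 := hmin a ha h
      subst hby
      exact hay (le_antisymm hab h2)
    · simp only [if_neg hay, if_neg hby]
      exact hab

lemma map_replace_id {l : List ℕ} {y v : ℕ} (h : ∀ z ∈ l, z ≠ y) :
    (l.map fun z => if z = y then v else z) = l := by
  induction l with
  | nil => rfl
  | cons a t ih =>
    simp only [List.map_cons, if_neg (h a (by simp)), ih (fun z hz => h z (by simp [hz]))]

lemma sorted_head_split {y : ℕ} : ∀ {H : List ℕ}, H.Pairwise (· ≤ ·) → H.head? = some y →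
    ∃ n H2, H = List.replicate (n+1) y ++ H2 ∧ (∀ x ∈ H2, y < x) ∧ H2.Pairwise (· ≤ ·) := by
  intro H
  induction H with
  | nil => simp
  | cons a t ih =>
    intro hs hh
    have ha : a = y := by simpa using hh
    subst ha
    cases t with
    | nil => exact ⟨0, [], by simp, by simp, by simp⟩
    | cons b t' =>
      by_cases hb : b = a
      · obtain ⟨n, H2, he, hlt, hs2⟩ := ih hs.of_cons (by simp [hb])
        exact ⟨n + 1, H2, by rw [List.replicate_succ]; simp [he], hlt, hs2⟩
      · refine ⟨0, b :: t', by simp, ?_, hs.of_cons⟩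
        intro x hx
        have hab : a ≤ b := (List.pairwise_cons.1 hs).1 b (by simp)
        have hbx : b ≤ x := by
          rcases List.mem_cons.1 hx with rfl | hx
          · exact le_refl _
          · exact (List.pairwise_cons.1 hs.of_cons).1 x hx
        rcases lt_or_eq_of_le hab with h | h
        · omega
        · exact absurd h.symm hb

lemma high_mem_head {s : ℕ} {H : List ℕ} (hH : High s H) (hs' : s ∈ H) :
    H.head? = some s := by
  cases H with
  | nil => simp at hs'
  | cons a t =>
    have h1 : s ≤ a := hH.1 a (by simp)
    have h2 : a ≤ s := by
      rcases List.mem_cons.1 hs' with rfl | hs'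
      · exact le_refl _
      · exact (List.pairwise_cons.1 hH.2).1 s hs'
    simp [le_antisymm h2 h1]

end ColIns

namespace ColIns

lemma LH_getD {r s : ℕ} {cs : List (List ℕ)} (h : ∀ c ∈ cs, LH r s c) (j : ℕ) :
    LH r s (cs.getD j []) := by
  by_cases hj : j < cs.length
  · rw [List.getD_eq_getElem _ _ hj]
    exact h _ (List.getElem_mem hj)
  · rw [List.getD_eq_default _ _ (by omega)]
    exact LH_nil r s

lemma high_cascade (r s : ℕ) (hrs : r < s) :
    ∀ (cs : List (List ℕ)), (∀ c ∈ cs, LH r s c) → ∀ x : ℕ, s < x →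
    (∀ c ∈ insertCol x cs, LH r s c) ∧
    (∀ j, s ∈ (insertCol x cs).getD j [] ↔ s ∈ cs.getD j []) := by
  intro cs
  induction cs with
  | nil =>
    intro _ x hx
    constructor
    · intro c hc
      simp only [insertCol, List.mem_singleton] at hc
      subst hc
      exact ⟨[], [x], by simp, by simp [Low], ⟨by simp; omega, by simp⟩⟩
    · intro j
      cases j with
      | zero => simp [insertCol]; omega
      | succ j => simp [insertCol]
  | cons c cs ih =>
    intro hall x hx
    obtain ⟨L, H, rfl, hL, hH⟩ := hall c (by simp)
    have hfind : (L ++ H).find? (fun z => x < z) = H.find? (fun z => x < z) :=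
      find?_low_append x (by omega) hL H
    cases hfH : H.find? (fun z => (decide (x < z))) with
    | none =>
      have hnone : (L ++ H).find? (fun z => x < z) = none := by rw [hfind, hfH]
      rw [insertCol_cons_none hnone]
      have hHx : ∀ z ∈ H, ¬ x < z := by
        intro z hz
        simpa using List.find?_eq_none.1 hfH z hz
      constructor
      · intro c' hc'
        rcases List.mem_cons.1 hc' with rfl | hc'
        · refine ⟨L, H ++ [x], by simp, hL, ⟨?_, ?_⟩⟩
          · intro z hz
            rcases List.mem_append.1 hz with hz | hz
            · exact hH.1 z hz
            · simp at hz; omega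
          · rw [List.pairwise_append]
            refine ⟨hH.2, by simp, ?_⟩
            intro a ha b hb
            simp at hb; subst hb
            have := hHx a ha; omega
        · exact hall _ (List.mem_cons_of_mem _ hc')
      · intro j
        cases j with
        | zero =>
          have hxs : s ≠ x := by omega
          simp [hxs]
        | succ j => simp
    | some y =>
      have hsome : (L ++ H).find? (fun z => x < z) = some y := by rw [hfind, hfH]
      rw [insertCol_cons_some hsome]
      have hyH : y ∈ H := List.mem_of_find?_eq_some hfH
      have hxy : x < y := by simpa using List.find?_some hfH
      have hys : s ≤ y := hH.1 y hyH
      have hmin := find?_min hH.2 hfH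
      have hmapL : (L.map fun z => if z = y then x else z) = L :=
        map_replace_id (by intro z hz; have := hL z hz; omega)
      obtain ⟨ih1, ih2⟩ := ih (fun c hc => hall c (List.mem_cons_of_mem _ hc)) y (by omega)
      constructor
      · intro c' hc'
        rcases List.mem_cons.1 hc' with rfl | hc'
        · refine ⟨L, H.map fun z => if z = y then x else z,
            by rw [List.map_append, hmapL], hL, ⟨?_, sorted_replace hH.2 hxy hmin⟩⟩
          intro w hw
          obtain ⟨z, hz, hzw⟩ := List.mem_map.1 hw
          by_cases h : z = y
          · simp [h] at hzw; omega
          · simp [h] at hzw; subst hzw; exact hH.1 z hz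
        · exact ih1 _ hc'
      · intro j
        cases j with
        | zero =>
          simp only [List.getD_cons_zero]
          constructor
          · intro hmem
            obtain ⟨z, hz, hzs⟩ := List.mem_map.1 hmem
            by_cases h : z = y
            · simp [h] at hzs; omega
            · simp [h] at hzs; subst hzs; exact hz
          · intro hmem
            exact List.mem_map.2 ⟨s, hmem, by simp [show s ≠ y by omega]⟩
        | succ j =>
          simpa using ih2 j

lemma insert_s (r s : ℕ) (hrs : r < s) :
    ∀ (cs : List (List ℕ)), (∀ c ∈ cs, LH r s c) →
    (∀ c ∈ insertCol s cs, LH r s c) ∧ s ∈ (insertCol s cs).getD 0 [] := by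
  intro cs hall
  cases cs with
  | nil =>
    constructor
    · intro c hc
      simp only [insertCol, List.mem_singleton] at hc
      subst hc
      exact ⟨[], [s], by simp, by simp [Low], ⟨by simp, by simp⟩⟩
    · simp [insertCol]
  | cons c cs =>
    obtain ⟨L, H, rfl, hL, hH⟩ := hall c (by simp)
    have hfind : (L ++ H).find? (fun z => s < z) = H.find? (fun z => s < z) :=
      find?_low_append s hrs hL H
    cases hfH : H.find? (fun z => (decide (s < z))) with
    | none =>
      have hnone : (L ++ H).find? (fun z => s < z) = none := by rw [hfind, hfH]
      rw [insertCol_cons_none hnone]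
      have hHs : ∀ z ∈ H, ¬ s < z := fun z hz => by simpa using List.find?_eq_none.1 hfH z hz
      constructor
      · intro c' hc'
        rcases List.mem_cons.1 hc' with rfl | hc'
        · refine ⟨L, H ++ [s], by simp, hL, ⟨?_, ?_⟩⟩
          · intro z hz
            rcases List.mem_append.1 hz with hz | hz
            · exact hH.1 z hz
            · simp at hz; omega
          · rw [List.pairwise_append]
            refine ⟨hH.2, by simp, ?_⟩
            intro a ha b hb
            simp at hb; subst hb
            have := hHs a ha; omega
        · exact hall _ (List.mem_cons_of_mem _ hc')
      · simp
    | some y =>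
      have hsome : (L ++ H).find? (fun z => s < z) = some y := by rw [hfind, hfH]
      rw [insertCol_cons_some hsome]
      have hyH : y ∈ H := List.mem_of_find?_eq_some hfH
      have hsy : s < y := by simpa using List.find?_some hfH
      have hmin := find?_min hH.2 hfH
      have hmapL : (L.map fun z => if z = y then s else z) = L :=
        map_replace_id (fun z hz => by have := hL z hz; omega)
      obtain ⟨ih1, ih2⟩ := high_cascade r s hrs cs (fun c hc => hall c (List.mem_cons_of_mem _ hc)) y hsy
      constructor
      · intro c' hc'
        rcases List.mem_cons.1 hc' with rfl | hc'
        · refine ⟨L, H.map fun z => if z = y then s else z,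
            by rw [List.map_append, hmapL], hL, ⟨?_, sorted_replace hH.2 hsy hmin⟩⟩
          intro w hw
          obtain ⟨z, hz, hzw⟩ := List.mem_map.1 hw
          by_cases h : z = y
          · simp [h] at hzw; omega
          · simp [h] at hzw; subst hzw; exact hH.1 z hz
        · exact ih1 _ hc'
      · simp only [List.getD_cons_zero]
        exact List.mem_map.2 ⟨y, List.mem_append.2 (Or.inr hyH), by simp⟩

end ColIns

namespace ColIns

lemma gap_insert (r s : ℕ) (v g : ℕ) (hrv : r < v) (hvg : v < g) (hgs : g < s)
    {c : List ℕ} (cs : List (List ℕ)) (hc : GC r s g c) :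
    ∃ c', insertCol v (c :: cs) = c' :: insertCol g cs ∧ GC r s v c' ∧
      (∀ w ∈ c', w ∈ c ∨ w = v) := by
  obtain ⟨L, n, H, rfl, hL, hH⟩ := hc
  have hfind : (L ++ List.replicate (n+1) g ++ H).find? (fun z => v < z) = some g := by
    rw [List.append_assoc, find?_low_append v hrv hL, List.replicate_succ, List.cons_append,
      List.find?_cons_of_pos (by simpa using hvg)]
  rw [insertCol_cons_some hfind]
  have h1 : (L.map fun z => if z = g then v else z) = L :=
    map_replace_id (fun z hz => by have := hL z hz; omega)
  have h2 : ((List.replicate (n+1) g).map fun z => if z = g then v else z)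
      = List.replicate (n+1) v := by
    rw [List.map_replicate]; simp
  have h3 : (H.map fun z => if z = g then v else z) = H :=
    map_replace_id (fun z hz => by have := hH.1 z hz; omega)
  refine ⟨_, rfl, ?_, ?_⟩
  · rw [List.map_append, List.map_append, h1, h2, h3]
    exact ⟨L, n, H, rfl, hL, hH⟩
  · intro w hw
    obtain ⟨z, hz, hzw⟩ := List.mem_map.1 hw
    by_cases h : z = g
    · simp [h] at hzw; omega
    · simp [h] at hzw; subst hzw; exact Or.inl hz

lemma gap_insert_b (r s : ℕ) (hrs : r < s) (w : ℕ) (hrw : r < w) (hws : w < s)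
    (cs : List (List ℕ)) (hcs : ∀ c ∈ cs, LH r s c) (hs0 : s ∈ cs.getD 0 []) :
    GC r s w ((insertCol w cs).getD 0 []) ∧ s ∉ (insertCol w cs).getD 0 [] ∧
    (∀ j, LH r s ((insertCol w cs).getD (j+1) [])) ∧ s ∈ (insertCol w cs).getD 1 [] := by
  cases cs with
  | nil => simp at hs0
  | cons c cs =>
    obtain ⟨L, H, rfl, hL, hH⟩ := hcs c (by simp)
    simp only [List.getD_cons_zero] at hs0
    have hsH : s ∈ H := by
      rcases List.mem_append.1 hs0 with h | h
      · have := hL s h; omega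
      · exact h
    have hhead := high_mem_head hH hsH
    obtain ⟨n, H2, hHe, hH2, hH2s⟩ := sorted_head_split hH.2 hhead
    have hfH : H.find? (fun z => w < z) = some s := by
      rw [find?_all_head (fun z hz => by simpa using lt_of_lt_of_le hws (hH.1 z hz)), hhead]
    have hsome : (L ++ H).find? (fun z => w < z) = some s := by
      rw [find?_low_append w hrw hL, hfH]
    rw [insertCol_cons_some hsome]
    have h1 : (L.map fun z => if z = s then w else z) = L :=
      map_replace_id (fun z hz => by have := hL z hz; omega)
    have h2 : (H.map fun z => if z = s then w else z) = List.replicate (n+1) w ++ H2 := by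
      rw [hHe, List.map_append, List.map_replicate]
      simp only [if_pos rfl]
      congr 1
      exact map_replace_id (fun z hz => by have := hH2 z hz; omega)
    obtain ⟨is1, is2⟩ := insert_s r s hrs cs (fun c hc => hcs c (List.mem_cons_of_mem _ hc))
    refine ⟨?_, ?_, ?_, ?_⟩
    · simp only [List.getD_cons_zero, List.map_append, h1, h2]
      refine ⟨L, n, H2, by rw [List.append_assoc], hL, ⟨fun z hz => le_of_lt (hH2 z hz), hH2s⟩⟩
    · simp only [List.getD_cons_zero, List.map_append, h1, h2]
      intro hmem
      simp only [List.mem_append, List.mem_replicate] at hmem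
      rcases hmem with h | ⟨_, h⟩ | h
      · have := hL s h; omega
      · omega
      · have := hH2 s h; omega
    · intro j
      simp only [List.getD_cons_succ]
      exact LH_getD is1 j
    · exact is2

lemma gap_insert_a (r s : ℕ) (hrs : r < s) (w : ℕ) (hrw : r < w) (hws : w < s)
    (cs : List (List ℕ)) (hcs : ∀ c ∈ cs, LH r s c) (hs0 : s ∉ cs.getD 0 []) :
    GC r s w ((insertCol w cs).getD 0 []) ∧ s ∉ (insertCol w cs).getD 0 [] ∧
    (∀ j, LH r s ((insertCol w cs).getD (j+1) [])) ∧
    (∀ j, s ∈ (insertCol w cs).getD (j+1) [] ↔ s ∈ cs.getD (j+1) []) := by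
  cases cs with
  | nil =>
    refine ⟨?_, ?_, ?_, ?_⟩
    · simp only [insertCol, List.getD_cons_zero]
      exact ⟨[], 0, [], by simp, by simp [Low], high_nil s⟩
    · simp only [insertCol, List.getD_cons_zero]
      simp; omega
    · intro j
      simp only [insertCol, List.getD_cons_succ]
      have : ([] : List (List ℕ)).getD j [] = [] := by simp
      rw [this]
      exact LH_nil r s
    · intro j
      simp [insertCol]
  | cons c cs =>
    obtain ⟨L, H, rfl, hL, hH⟩ := hcs c (by simp)
    have hsnc : s ∉ L ++ H := by simpa using hs0
    cases H with
    | nil =>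
      have hnone : (L ++ ([] : List ℕ)).find? (fun z => w < z) = none := by
        rw [find?_low_append w hrw hL]
        rfl
      rw [insertCol_cons_none hnone]
      refine ⟨?_, ?_, ?_, ?_⟩
      · simp only [List.getD_cons_zero]
        exact ⟨L, 0, [], by simp, hL, high_nil s⟩
      · simp only [List.getD_cons_zero]
        intro hmem
        simp only [List.append_nil, List.mem_append, List.mem_singleton] at hmem
        rcases hmem with h | h
        · have := hL s h; omega
        · omega
      · intro j
        simp only [List.getD_cons_succ]
        exact LH_getD (fun c hc => hcs c (List.mem_cons_of_mem _ hc)) j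
      · intro j
        simp
    | cons y H' =>
      have hally : ∀ z ∈ (y :: H'), decide (w < z) = true := by
        intro z hz
        have := hH.1 z hz
        simp only [decide_eq_true_eq]
        omega
      have hfH : (y :: H').find? (fun z => w < z) = some y := by
        rw [find?_all_head hally]; rfl
      have hsome : (L ++ y :: H').find? (fun z => w < z) = some y := by
        rw [find?_low_append w hrw hL, hfH]
      have hys : s ≤ y := hH.1 y (by simp)
      have hy_ne : y ≠ s := by
        intro he
        exact hsnc (List.mem_append.2 (Or.inr (by simp [he])))
      have hsy : s < y := by omega
      obtain ⟨n, H2, hHe, hH2, hH2s⟩ := sorted_head_split hH.2 (by rfl)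
      rw [insertCol_cons_some hsome]
      have h1 : (L.map fun z => if z = y then w else z) = L :=
        map_replace_id (fun z hz => by have := hL z hz; omega)
      have h2 : ((y :: H').map fun z => if z = y then w else z)
          = List.replicate (n+1) w ++ H2 := by
        rw [hHe, List.map_append, List.map_replicate]
        simp only [if_pos rfl]
        congr 1
        exact map_replace_id (fun z hz => by have := hH2 z hz; omega)
      obtain ⟨hc1, hc2⟩ := high_cascade r s hrs cs (fun c hc => hcs c (List.mem_cons_of_mem _ hc)) y hsy
      refine ⟨?_, ?_, ?_, ?_⟩
      · simp only [List.getD_cons_zero, List.map_append, h1, h2]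
        refine ⟨L, n, H2, by rw [List.append_assoc], hL,
          ⟨fun z hz => le_of_lt (lt_trans hsy (hH2 z hz)), hH2s⟩⟩
      · simp only [List.getD_cons_zero, List.map_append, h1, h2]
        intro hmem
        simp only [List.mem_append, List.mem_replicate] at hmem
        rcases hmem with h | ⟨_, h⟩ | h
        · have := hL s h; omega
        · omega
        · have := hH2 s h; omega
      · intro j
        simp only [List.getD_cons_succ]
        exact LH_getD hc1 j
      · intro j
        simp only [List.getD_cons_succ]
        exact hc2 j

lemma gap_chain (r s : ℕ) :
    ∀ (gs : List ℕ) (U : List (List ℕ)) (v : ℕ), r < v → (∀ g ∈ gs, g < s) →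
      (v :: gs).Pairwise (· < ·) →
      (∀ j, j < gs.length → GC r s (gs.getD j 0) (U.getD j [])) →
      ∃ V, insertCol v U = V ++ insertCol ((v :: gs).getD gs.length 0) (U.drop gs.length) ∧
        V.length = gs.length ∧
        (∀ j, j < gs.length → GC r s ((v :: gs).getD j 0) (V.getD j []) ∧
          (s ∈ V.getD j [] → s ∈ U.getD j [])) := by
  intro gs
  induction gs with
  | nil =>
    intro U v _ _ _ _
    exact ⟨[], by simp, rfl, by simp⟩
  | cons g gs ih =>
    intro U v hrv hgs hsort hGC
    have hvg : v < g := (List.pairwise_cons.1 hsort).1 g (by simp)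
    have hg_s : g < s := hgs g (by simp)
    have h0 := hGC 0 (by simp)
    cases U with
    | nil =>
      exfalso
      obtain ⟨L, n, H, he, _, _⟩ := h0
      have := congrArg List.length he
      simp [List.length_replicate] at this
      omega
    | cons c U' =>
      simp only [List.getD_cons_zero] at h0
      obtain ⟨c', heq, hGCc', hmemc'⟩ := gap_insert r s v g hrv hvg hg_s U' (by simpa using h0)
      obtain ⟨V', heq', hlen', hV'⟩ := ih U' g (by omega)
        (fun g' hg' => hgs g' (by simp [hg'])) hsort.of_cons
        (fun j hj => by simpa using hGC (j+1) (by simpa using Nat.succ_lt_succ hj))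
      refine ⟨c' :: V', ?_, by simp [hlen'], ?_⟩
      · rw [heq, heq']
        simp
      · intro j hj
        cases j with
        | zero =>
          refine ⟨by simpa using hGCc', ?_⟩
          intro hs'
          rcases hmemc' s hs' with h | h
          · simpa using h
          · omega
        | succ j =>
          have := hV' j (by simpa using hj)
          simpa using this

end ColIns

namespace ColIns

def Inv (r s c0 : ℕ) (gs : List ℕ) (U : List (List ℕ)) : Prop :=
  (∀ j, j < gs.length → GC r s (gs.getD j 0) (U.getD j [])) ∧
  (∀ j, gs.length ≤ j → LH r s (U.getD j [])) ∧
  s ∈ U.getD (max c0 gs.length) [] ∧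
  (∀ j, j < max c0 gs.length → s ∉ U.getD j [])

lemma step (r s c0 : ℕ) (hrs : r < s) (gs : List ℕ) (U : List (List ℕ)) (v : ℕ)
    (hv : r < v) (hvs : v < s) (hgs : ∀ g ∈ gs, g < s) (hsort : (v :: gs).Pairwise (· < ·))
    (hInv : Inv r s c0 gs U) : Inv r s c0 (v :: gs) (insertCol v U) := by
  obtain ⟨h1, h2, h3, h4⟩ := hInv
  obtain ⟨V, heq, hVlen, hV⟩ := gap_chain r s gs U v hv hgs hsort h1
  have hw_mem : (v :: gs).getD gs.length 0 ∈ v :: gs := by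
    have hlt : gs.length < (v :: gs).length := by simp
    rw [List.getD_eq_getElem _ _ hlt]
    exact List.getElem_mem hlt
  have hvlt : ∀ g ∈ gs, v < g := (List.pairwise_cons.1 hsort).1
  have hrw : r < (v :: gs).getD gs.length 0 := by
    rcases List.mem_cons.1 hw_mem with h | h
    · omega
    · have := hvlt _ h; omega
  have hws : (v :: gs).getD gs.length 0 < s := by
    rcases List.mem_cons.1 hw_mem with h | h
    · omega
    · exact hgs _ h
  have hdropD : ∀ j, (U.drop gs.length).getD j [] = U.getD (gs.length + j) [] := by
    intro j
    rw [List.getD_eq_getElem?_getD, List.getD_eq_getElem?_getD, List.getElem?_drop]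
  have hWall : ∀ c ∈ U.drop gs.length, LH r s c := by
    intro c hc
    obtain ⟨j, hj, hjc⟩ := List.mem_iff_getElem.1 hc
    have hce : c = (U.drop gs.length).getD j [] := by rw [List.getD_eq_getElem _ _ hj, hjc]
    rw [hce, hdropD]
    exact h2 (gs.length + j) (by omega)
  have hUD : ∀ j, (insertCol v U).getD j [] =
      if j < gs.length then V.getD j []
      else (insertCol ((v :: gs).getD gs.length 0) (U.drop gs.length)).getD (j - gs.length) [] := by
    intro j
    rw [heq]
    by_cases hj : j < gs.length
    · rw [if_pos hj, List.getD_append _ _ _ _ (by omega)]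
    · rw [if_neg hj, List.getD_append_right _ _ _ _ (by omega), hVlen]
  by_cases hc0 : c0 ≤ gs.length
  · -- case B : s is bumped from column gs.length to column gs.length + 1
    have hs0 : s ∈ (U.drop gs.length).getD 0 [] := by
      rw [hdropD]
      have hq : max c0 gs.length = gs.length := by omega
      rw [hq] at h3
      simpa using h3
    obtain ⟨hB1, hB2, hB3, hB4⟩ := gap_insert_b r s hrs _ hrw hws (U.drop gs.length) hWall hs0
    refine ⟨?_, ?_, ?_, ?_⟩
    · intro j hj
      simp only [List.length_cons] at hj
      rw [hUD j]
      by_cases hjt : j < gs.length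
      · rw [if_pos hjt]
        exact (hV j hjt).1
      · have hje : j = gs.length := by omega
        subst hje
        rw [if_neg (by omega), Nat.sub_self]
        exact hB1
    · intro j hj
      simp only [List.length_cons] at hj
      rw [hUD j, if_neg (by omega)]
      have hje : j - gs.length = (j - gs.length - 1) + 1 := by omega
      rw [hje]
      exact hB3 _
    · have hmax : max c0 (v :: gs).length = gs.length + 1 := by simp; omega
      rw [hmax, hUD, if_neg (by omega)]
      have hje : gs.length + 1 - gs.length = 1 := by omega
      rw [hje]
      exact hB4
    · intro j hj
      have hmax : max c0 (v :: gs).length = gs.length + 1 := by simp; omega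
      rw [hmax] at hj
      rw [hUD j]
      by_cases hjt : j < gs.length
      · rw [if_pos hjt]
        intro hs'
        exact h4 j (by omega) ((hV j hjt).2 hs')
      · have hje : j = gs.length := by omega
        subst hje
        rw [if_neg (by omega), Nat.sub_self]
        exact hB2
  · -- case A : s stays in column c0
    have hs0 : s ∉ (U.drop gs.length).getD 0 [] := by
      rw [hdropD]
      have := h4 gs.length (by omega)
      simpa using this
    obtain ⟨hA1, hA2, hA3, hA4⟩ := gap_insert_a r s hrs _ hrw hws (U.drop gs.length) hWall hs0
    refine ⟨?_, ?_, ?_, ?_⟩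
    · intro j hj
      simp only [List.length_cons] at hj
      rw [hUD j]
      by_cases hjt : j < gs.length
      · rw [if_pos hjt]
        exact (hV j hjt).1
      · have hje : j = gs.length := by omega
        subst hje
        rw [if_neg (by omega), Nat.sub_self]
        exact hA1
    · intro j hj
      simp only [List.length_cons] at hj
      rw [hUD j, if_neg (by omega)]
      have hje : j - gs.length = (j - gs.length - 1) + 1 := by omega
      rw [hje]
      exact hA3 _
    · have hmax : max c0 (v :: gs).length = c0 := by simp; omega
      rw [hmax, hUD, if_neg (by omega)]
      have hje : c0 - gs.length = (c0 - gs.length - 1) + 1 := by omega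
      rw [hje, hA4, ← hje, hdropD]
      have hje2 : gs.length + (c0 - gs.length) = c0 := by omega
      rw [hje2]
      have hq : max c0 gs.length = c0 := by omega
      rw [hq] at h3
      exact h3
    · intro j hj
      have hmax : max c0 (v :: gs).length = c0 := by simp; omega
      rw [hmax] at hj
      rw [hUD j]
      by_cases hjt : j < gs.length
      · rw [if_pos hjt]
        intro hs'
        exact h4 j (by omega) ((hV j hjt).2 hs')
      · by_cases hjt2 : j = gs.length
        · subst hjt2
          rw [if_neg (by omega), Nat.sub_self]
          exact hA2
        · rw [if_neg (by omega)]
          have hje : j - gs.length = (j - gs.length - 1) + 1 := by omega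
          rw [hje, hA4, ← hje, hdropD]
          have hje2 : gs.length + (j - gs.length) = j := by omega
          rw [hje2]
          exact h4 j (by omega)

lemma mk_LH (r s : ℕ) : ∀ (c : List ℕ), c.Pairwise (· < ·) → (∀ x ∈ c, x ≤ r ∨ s ≤ x) →
    LH r s c := by
  intro c
  induction c with
  | nil => intro _ _; exact LH_nil r s
  | cons a t ih =>
    intro hsorted h
    rcases h a (by simp) with ha | ha
    · obtain ⟨L, H, he, hL, hH⟩ := ih hsorted.of_cons (fun x hx => h x (by simp [hx]))
      refine ⟨a :: L, H, by simp [he], ?_, hH⟩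
      intro x hx
      rcases List.mem_cons.1 hx with rfl | hx
      · exact ha
      · exact hL x hx
    · refine ⟨[], a :: t, by simp, by simp [Low], ⟨?_, ?_⟩⟩
      · intro x hx
        rcases List.mem_cons.1 hx with rfl | hx
        · exact ha
        · have := (List.pairwise_cons.1 hsorted).1 x hx; omega
      · exact hsorted.imp le_of_lt

lemma outer (r s c0 : ℕ) (hrs : r < s) (T : List (List ℕ))
    (hT2 : ∀ j, LH r s (T.getD j [])) (hs3 : s ∈ T.getD c0 [])
    (hs4 : ∀ j, j < c0 → s ∉ T.getD j []) :
    ∀ suf : List ℕ, suf.Pairwise (· < ·) → (∀ a ∈ suf, r < a ∧ a < s) →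
      Inv r s c0 suf (suf.reverse.foldl (fun U v => insertCol v U) T) := by
  intro suf
  induction suf with
  | nil =>
    intro _ _
    refine ⟨by simp, fun j _ => hT2 j, by simpa using hs3, by simpa using hs4⟩
  | cons v suf ih =>
    intro hsort hmem
    have hrev : (v :: suf).reverse = suf.reverse ++ [v] := by simp
    rw [hrev, List.foldl_append]
    simp only [List.foldl_cons, List.foldl_nil]
    exact step r s c0 hrs suf _ v (hmem v (by simp)).1 (hmem v (by simp)).2
      (fun g hg => (hmem g (by simp [hg])).2) hsort
      (ih hsort.of_cons (fun a ha => hmem a (by simp [ha])))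

end ColIns

/-- Lemma 2.2(1) of Lanini–McNamara: let `T` be a standard tableau, `s` an entry of `T`,
`r` such that no entry of `T` lies in the open interval `(r, s)`, and `0 < k ≤ s - r`.
Column inserting `r_{k-1}, …, r_1` (with `r < r_1 < ⋯ < r_{k-1} < s`) into `T` yields `T'`
in which `r_i` lies in column `i` and `s` lies in column `max (c_T s) k`. -/
theorem columns_after_insertion (T : List (List ℕ)) (hT : ColsStandard T) (s r k : ℕ)
    (hs : s ∈ T.flatten) (hgap : ∀ a ∈ T.flatten, ¬(r < a ∧ a < s))
    (hk : 0 < k) (hks : k ≤ s - r)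
    (rs : List ℕ) (hlen : rs.length = k - 1) (hsort : rs.Pairwise (· < ·))
    (hmem : ∀ a ∈ rs, r < a ∧ a < s)
    (T' : List (List ℕ)) (hT' : T' = rs.reverse.foldl (fun U v => insertCol v U) T) :
    (∀ i, i < rs.length → colIndex T' (rs.getD i 0) = i + 1) ∧
    colIndex T' s = max (colIndex T s) k := by
  have hrs : r < s := by omega
  have hcontains : ∀ (l : List ℕ) (a : ℕ), (l.contains a = true) ↔ a ∈ l :=
    fun l a => List.elem_iff
  have hT2 : ∀ j, ColIns.LH r s (T.getD j []) := by
    intro j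
    by_cases hj : j < T.length
    · rw [List.getD_eq_getElem _ _ hj]
      have hmemT : T[j] ∈ T := List.getElem_mem hj
      apply ColIns.mk_LH
      · exact (hT.1 _ hmemT).2
      · intro x hx
        have hxf : x ∈ T.flatten := List.mem_flatten.2 ⟨_, hmemT, hx⟩
        have := hgap x hxf
        omega
    · rw [List.getD_eq_default _ _ (by omega)]
      exact ColIns.LH_nil r s
  have hc0lt : T.findIdx (fun c => c.contains s) < T.length := by
    apply List.findIdx_lt_length_of_exists
    obtain ⟨c, hcT, hsc⟩ := List.mem_flatten.1 hs
    exact ⟨c, hcT, (hcontains c s).2 hsc⟩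
  have hs3 : s ∈ T.getD (T.findIdx (fun c => c.contains s)) [] := by
    rw [List.getD_eq_getElem _ _ hc0lt]
    exact (hcontains _ s).1 (List.findIdx_getElem (w := hc0lt))
  have hs4 : ∀ j, j < T.findIdx (fun c => c.contains s) → s ∉ T.getD j [] := by
    intro j hj
    rw [List.getD_eq_getElem _ _ (by omega)]
    intro hmem'
    have hfalse := List.not_of_lt_findIdx hj
    rw [(hcontains _ s).2 hmem'] at hfalse
    exact Bool.true_eq_false.mp hfalse
  obtain ⟨h1, h2, h3, h4⟩ :=
    ColIns.outer r s (T.findIdx (fun c => c.contains s)) hrs T hT2 hs3 hs4 rs hsort hmem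
  rw [← hT'] at h1 h2 h3 h4
  constructor
  · intro i hi
    have ha_mem : rs.getD i 0 ∈ rs := by
      rw [List.getD_eq_getElem _ _ hi]; exact List.getElem_mem hi
    obtain ⟨har, has⟩ := hmem _ ha_mem
    obtain ⟨L, n, H, he, hL, hH⟩ := h1 i hi
    have hiU : i < T'.length := by
      by_contra hcon
      rw [List.getD_eq_default _ _ (by omega)] at he
      have := congrArg List.length he
      simp at this
      omega
    rw [List.getD_eq_getElem _ _ hiU] at he
    have haU : (fun c => c.contains (rs.getD i 0)) T'[i] = true := by
      refine (hcontains _ _).2 ?_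
      rw [he]
      refine List.mem_append.2 (Or.inl (List.mem_append.2 (Or.inr ?_)))
      exact List.mem_replicate.2 ⟨by omega, rfl⟩
    have hidx : T'.findIdx (fun c => c.contains (rs.getD i 0)) = i := by
      rw [List.findIdx_eq hiU]
      refine ⟨haU, ?_⟩
      intro j hji
      obtain ⟨L', m, H', he', hL', hH'⟩ := h1 j (by omega)
      rw [List.getD_eq_getElem _ _ (by omega : j < T'.length)] at he'
      have hnotin : rs.getD i 0 ∉ T'[j] := by
        rw [he']
        simp only [List.mem_append, List.mem_replicate]
        rintro ((h | ⟨_, h⟩) | h)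
        · have := hL' _ h; omega
        · have hlt : rs.getD j 0 < rs.getD i 0 := by
            rw [List.getD_eq_getElem _ _ (by omega : j < rs.length),
              List.getD_eq_getElem _ _ hi]
            exact List.pairwise_iff_getElem.1 hsort j i _ _ hji
          omega
        · have := hH'.1 _ h; omega
      refine Bool.eq_false_iff.2 ?_
      intro hc
      exact hnotin ((hcontains _ _).1 hc)
    simp only [colIndex, hidx]
  · have hqU : max (T.findIdx (fun c => c.contains s)) rs.length < T'.length := by
      by_contra hcon
      rw [List.getD_eq_default _ _ (by omega)] at h3
      simp at h3
    have hidx : T'.findIdx (fun c => c.contains s)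
        = max (T.findIdx (fun c => c.contains s)) rs.length := by
      rw [List.findIdx_eq hqU]
      constructor
      · have hmem' : s ∈ T'[max (T.findIdx (fun c => c.contains s)) rs.length] := by
          rw [← List.getD_eq_getElem _ ([]) hqU]
          exact h3
        exact (hcontains _ _).2 hmem'
      · intro j hj
        have hnotin := h4 j hj
        rw [List.getD_eq_getElem _ _ (by omega : j < T'.length)] at hnotin
        refine Bool.eq_false_iff.2 ?_
        intro hc
        exact hnotin ((hcontains _ _).1 hc)
    simp only [colIndex, hidx]
    omega
end

section
/- With T, s, r, k, r_1 < ... < r_{k-1}, and T' as in the column-insertion setup, let s' be an entry of T with s' > s, let m = max(c_T(s), k), and let n be the number of entries of T lying in the half-open interval [s, s'). Then either c_{T'}(s') = c_T(s') or c_{T'}(s') ≤ m + n. -/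
section Aux

lemma contains_eq' (l : List ℕ) (a : ℕ) : l.contains a = decide (a ∈ l) :=
  List.elem_eq_mem a l

lemma contains_true_of_mem {l : List ℕ} {a : ℕ} (h : a ∈ l) : l.contains a = true := by
  rw [contains_eq']; exact decide_eq_true h

lemma contains_false_of_not_mem {l : List ℕ} {a : ℕ} (h : a ∉ l) : l.contains a = false := by
  rw [contains_eq']; exact decide_eq_false h

lemma not_mem_of_contains_false {l : List ℕ} {a : ℕ} (h : l.contains a = false) : a ∉ l := by
  rw [contains_eq'] at h; exact of_decide_eq_false h

lemma findIdx_cons_eq_zero {α : Type*} {p : α → Bool} {c : α} (cs : List α)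
    (h : p c = true) : List.findIdx p (c :: cs) = 0 := by
  rw [List.findIdx_cons, h]; rfl

lemma findIdx_cons_succ {α : Type*} {p : α → Bool} {c : α} (cs : List α)
    (h : p c = false) : List.findIdx p (c :: cs) = List.findIdx p cs + 1 := by
  rw [List.findIdx_cons, h]; rfl

/-- The inserted value always lands in the first column of the result. -/
lemma insertCol_head_mem (w : ℕ) (W : List (List ℕ)) :
    ∃ c₀ cs₀, insertCol w W = c₀ :: cs₀ ∧ w ∈ c₀ := by
  cases W with
  | nil => exact ⟨[w], [], rfl, by simp⟩
  | cons c cs =>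
    cases h : c.find? (fun x => w < x) with
    | none => exact ⟨c ++ [w], cs, by simp [insertCol, h], by simp⟩
    | some x =>
      refine ⟨c.map fun y => if y = x then w else y, insertCol x cs,
        by simp [insertCol, h], ?_⟩
      have hx : x ∈ c := List.mem_of_find?_eq_some h
      exact List.mem_map.2 ⟨x, hx, by simp⟩

lemma self_mem_insertCol (w : ℕ) (W : List (List ℕ)) : w ∈ (insertCol w W).flatten := by
  obtain ⟨c₀, cs₀, hW, hw⟩ := insertCol_head_mem w W
  rw [hW]; simp [hw]

lemma mem_insertCol_of_mem (a : ℕ) :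
    ∀ (W : List (List ℕ)) (v : ℕ), a ∈ W.flatten → a ∈ (insertCol v W).flatten := by
  intro W
  induction W with
  | nil => intro v h; simp at h
  | cons c cs ih =>
    intro v h
    rw [List.flatten_cons, List.mem_append] at h
    cases hf : c.find? (fun x => v < x) with
    | none =>
      simp only [insertCol, hf, List.flatten_cons, List.mem_append]
      rcases h with h | h
      · exact Or.inl (by simp [h])
      · exact Or.inr h
    | some x =>
      simp only [insertCol, hf, List.flatten_cons, List.mem_append]
      rcases h with h | h
      · by_cases hax : a = x
        · subst hax
          exact Or.inr (self_mem_insertCol a cs)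
        · exact Or.inl (List.mem_map.2 ⟨a, h, by simp [hax]⟩)
      · exact Or.inr (ih x h)

lemma mem_of_mem_insertCol (a : ℕ) :
    ∀ (W : List (List ℕ)) (v : ℕ), a ∈ (insertCol v W).flatten → a = v ∨ a ∈ W.flatten := by
  intro W
  induction W with
  | nil => intro v h; simpa [insertCol] using h
  | cons c cs ih =>
    intro v h
    cases hf : c.find? (fun x => v < x) with
    | none =>
      simp only [insertCol, hf, List.flatten_cons, List.mem_append, List.mem_singleton] at h
      rcases h with (h | h) | h
      · exact Or.inr (by simp [h])
      · exact Or.inl h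
      · exact Or.inr (by simp [h])
    | some x =>
      have hx : x ∈ c := List.mem_of_find?_eq_some hf
      simp only [insertCol, hf, List.flatten_cons, List.mem_append] at h
      rcases h with h | h
      · obtain ⟨y, hy, hya⟩ := List.mem_map.1 h
        by_cases hyx : y = x
        · rw [if_pos hyx] at hya; exact Or.inl hya.symm
        · rw [if_neg hyx] at hya; subst hya; exact Or.inr (by simp [hy])
      · rcases ih x h with h' | h'
        · subst h'; exact Or.inr (by simp [hx])
        · exact Or.inr (by simp [h'])

lemma contains_map_replace (c : List ℕ) (x v s' : ℕ) (hv : v ≠ s') (hx : x ≠ s') :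
    (s' ∈ c.map fun y => if y = x then v else y) ↔ s' ∈ c := by
  constructor
  · rintro h
    obtain ⟨y, hy, hys⟩ := List.mem_map.1 h
    by_cases hyx : y = x
    · rw [if_pos hyx] at hys; exact absurd hys hv
    · rw [if_neg hyx] at hys; subst hys; exact hy
  · intro h
    refine List.mem_map.2 ⟨s', h, ?_⟩
    rw [if_neg (fun hh => hx hh.symm)]

lemma contains_map_replace' (c : List ℕ) (x v s' : ℕ) (hv : v ≠ s') (hx : x ≠ s') :
    ((c.map fun y => if y = x then v else y).contains s') = c.contains s' := by
  rw [contains_eq', contains_eq', decide_eq_decide]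
  exact contains_map_replace c x v s' hv hx

lemma contains_append_singleton (c : List ℕ) (v s' : ℕ) (hv : v ≠ s') :
    ((c ++ [v]).contains s') = c.contains s' := by
  rw [contains_eq', contains_eq', decide_eq_decide]
  constructor
  · intro h
    rcases List.mem_append.1 h with h | h
    · exact h
    · rw [List.mem_singleton] at h; exact absurd h.symm hv
  · intro h
    exact List.mem_append.2 (Or.inl h)

/-- If `s' < w` then inserting `w` does not change the column of `s'`. -/
lemma findIdx_insertCol_of_gt (s' : ℕ) :
    ∀ (W : List (List ℕ)) (w : ℕ), s' ∈ W.flatten → s' < w →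
      (insertCol w W).findIdx (fun c => c.contains s') =
        W.findIdx (fun c => c.contains s') := by
  intro W
  induction W with
  | nil => intro w h; simp at h
  | cons c cs ih =>
    intro w hmem hlt
    have hws' : w ≠ s' := by omega
    cases hf : c.find? (fun x => w < x) with
    | none =>
      simp only [insertCol, hf]
      cases hcb : c.contains s' with
      | true =>
        rw [findIdx_cons_eq_zero (p := fun c : List ℕ => c.contains s') _ ((contains_append_singleton c w s' hws').trans hcb),
          findIdx_cons_eq_zero (p := fun c : List ℕ => c.contains s') _ hcb]
      | false =>
        rw [findIdx_cons_succ (p := fun c : List ℕ => c.contains s') _ ((contains_append_singleton c w s' hws').trans hcb),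
          findIdx_cons_succ (p := fun c : List ℕ => c.contains s') _ hcb]
    | some x =>
      have hwx : w < x := by
        have := List.find?_some hf; simpa using this
      have hxs' : x ≠ s' := by omega
      simp only [insertCol, hf]
      have hd := contains_map_replace' c x w s' hws' hxs'
      cases hcb : c.contains s' with
      | true =>
        rw [findIdx_cons_eq_zero (p := fun c : List ℕ => c.contains s') _ (hd.trans hcb), findIdx_cons_eq_zero (p := fun c : List ℕ => c.contains s') _ hcb]
      | false =>
        have hc : s' ∉ c := not_mem_of_contains_false hcb
        have hmem' : s' ∈ cs.flatten := by
          rw [List.flatten_cons, List.mem_append] at hmem; tauto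
        rw [findIdx_cons_succ (p := fun c : List ℕ => c.contains s') _ (hd.trans hcb), findIdx_cons_succ (p := fun c : List ℕ => c.contains s') _ hcb,
          ih x hmem' (by omega)]

/-- Key single-insertion lemma: inserting `v < s'` either leaves the (0-based) column
index of `s'` unchanged, or moves `s'` to a column of index at most
`1 + #{distinct values of W strictly between v and s'}`. -/
lemma findIdx_insertCol_bound (s' : ℕ) :
    ∀ (W : List (List ℕ)) (v : ℕ), s' ∈ W.flatten → v < s' →
      (insertCol v W).findIdx (fun c => c.contains s') =
        W.findIdx (fun c => c.contains s') ∨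
      (insertCol v W).findIdx (fun c => c.contains s') ≤
        1 + (W.flatten.toFinset.filter fun a => v < a ∧ a < s').card := by
  intro W
  induction W with
  | nil => intro v h; simp at h
  | cons c cs ih =>
    intro v hmem hlt
    have hvs' : v ≠ s' := by omega
    cases hf : c.find? (fun x => v < x) with
    | none =>
      left
      simp only [insertCol, hf]
      cases hcb : c.contains s' with
      | true =>
        rw [findIdx_cons_eq_zero (p := fun c : List ℕ => c.contains s') _ ((contains_append_singleton c v s' hvs').trans hcb),
          findIdx_cons_eq_zero (p := fun c : List ℕ => c.contains s') _ hcb]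
      | false =>
        rw [findIdx_cons_succ (p := fun c : List ℕ => c.contains s') _ ((contains_append_singleton c v s' hvs').trans hcb),
          findIdx_cons_succ (p := fun c : List ℕ => c.contains s') _ hcb]
    | some x =>
      have hvx : v < x := by
        have := List.find?_some hf; simpa using this
      have hxc : x ∈ c := List.mem_of_find?_eq_some hf
      by_cases hxs' : x = s'
      · -- s' itself is bumped from column 0; it lands in column 1
        right
        subst x
        simp only [insertCol, hf]
        have h1 : s' ∉ c.map fun y => if y = s' then v else y := by
          intro h
          obtain ⟨y, hy, hys⟩ := List.mem_map.1 h
          by_cases hyx : y = s'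
          · rw [if_pos hyx] at hys; exact hvs' hys
          · rw [if_neg hyx] at hys; exact hyx hys
        rw [findIdx_cons_succ (p := fun c : List ℕ => c.contains s') _ (contains_false_of_not_mem h1)]
        obtain ⟨c₀, cs₀, hW, hw⟩ := insertCol_head_mem s' cs
        rw [hW, findIdx_cons_eq_zero (p := fun c : List ℕ => c.contains s') _ (contains_true_of_mem hw)]
        omega
      · -- x ≠ s'
        simp only [insertCol, hf]
        have hd := contains_map_replace' c x v s' hvs' hxs'
        cases hcb : c.contains s' with
        | true =>
          left
          rw [findIdx_cons_eq_zero (p := fun c : List ℕ => c.contains s') _ (hd.trans hcb), findIdx_cons_eq_zero (p := fun c : List ℕ => c.contains s') _ hcb]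
        | false =>
          have hc : s' ∉ c := not_mem_of_contains_false hcb
          have hmem' : s' ∈ cs.flatten := by
            rw [List.flatten_cons, List.mem_append] at hmem; tauto
          rw [findIdx_cons_succ (p := fun c : List ℕ => c.contains s') _ (hd.trans hcb), findIdx_cons_succ (p := fun c : List ℕ => c.contains s') _ hcb]
          by_cases hxlt : x < s'
          · rcases ih x hmem' hxlt with h | h
            · left; rw [h]
            · right
              have hsub : insert x ((cs.flatten).toFinset.filter fun a => x < a ∧ a < s') ⊆
                  ((List.flatten (c :: cs)).toFinset.filter fun a => v < a ∧ a < s') := by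
                intro a ha
                rcases Finset.mem_insert.1 ha with rfl | ha
                · exact Finset.mem_filter.2
                    ⟨List.mem_toFinset.2 (by simp [hxc]), hvx, hxlt⟩
                · obtain ⟨ha1, ha2, ha3⟩ := Finset.mem_filter.1 ha
                  refine Finset.mem_filter.2 ⟨?_, by omega, ha3⟩
                  rw [List.mem_toFinset] at ha1 ⊢
                  simp [ha1]
              have hx_not : x ∉ ((cs.flatten).toFinset.filter fun a => x < a ∧ a < s') := by
                simp
              have hcard := Finset.card_le_card hsub
              rw [Finset.card_insert_of_notMem hx_not] at hcard
              omega
          · left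
            have hgt : s' < x := by omega
            rw [findIdx_insertCol_of_gt s' cs x hmem' hgt]

end Aux

lemma colIndex_eq (U : List (List ℕ)) (s' : ℕ) :
    colIndex U s' = U.findIdx (fun c => c.contains s') + 1 := rfl

lemma fold_invariant (T : List (List ℕ)) (r s s' k m n₀ : ℕ) (rs : List ℕ)
    (hlen : rs.length = k - 1) (hnd : rs.Nodup)
    (hmemrs : ∀ a ∈ rs, r < a ∧ a < s)
    (hgap : ∀ a ∈ T.flatten, ¬(r < a ∧ a < s))
    (hss' : s < s') (hkm : k ≤ m)
    (hn : (T.flatten.filter fun a => decide (s ≤ a ∧ a < s')).length ≤ n₀) :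
    ∀ (L : List ℕ) (U : List (List ℕ)), (∀ v ∈ L, v ∈ rs) →
      s' ∈ U.flatten →
      (∀ a ∈ U.flatten, a ∈ T.flatten ∨ a ∈ rs) →
      (colIndex U s' = colIndex T s' ∨ colIndex U s' ≤ m + n₀) →
      colIndex (L.foldl (fun W v => insertCol v W) U) s' = colIndex T s' ∨
      colIndex (L.foldl (fun W v => insertCol v W) U) s' ≤ m + n₀ := by
  intro L
  induction L with
  | nil => intro U _ _ _ h; simpa using h
  | cons v L' ih =>
    intro U hL hsU hsub hcol
    simp only [List.foldl_cons]
    have hvrs : v ∈ rs := hL v (by simp)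
    apply ih
    · intro w hw; exact hL w (by simp [hw])
    · exact mem_insertCol_of_mem s' U v hsU
    · intro a ha
      rcases mem_of_mem_insertCol a U v ha with rfl | h
      · exact Or.inr hvrs
      · exact hsub a h
    · -- the column-index invariant survives one insertion
      obtain ⟨hrv, hvs⟩ := hmemrs v hvrs
      have hvs' : v < s' := by omega
      rcases findIdx_insertCol_bound s' U v hsU hvs' with h | h
      · rw [colIndex_eq, h, ← colIndex_eq]
        exact hcol
      · right
        have hk2 : 2 ≤ k := by
          have h0 : 0 < rs.length := List.length_pos_iff.2 (List.ne_nil_of_mem hvrs)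
          omega
        -- bound the number of relevant values
        have hsubF : (U.flatten.toFinset.filter fun a => v < a ∧ a < s') ⊆
            (T.flatten.toFinset.filter fun a => s ≤ a ∧ a < s') ∪ (rs.toFinset.erase v) := by
          intro a ha
          obtain ⟨ha1, hav, has'⟩ := Finset.mem_filter.1 ha
          rcases hsub a (List.mem_toFinset.1 ha1) with hT | hR
          · refine Finset.mem_union.2 (Or.inl (Finset.mem_filter.2
              ⟨List.mem_toFinset.2 hT, ?_, has'⟩))
            have := hgap a hT
            omega
          · exact Finset.mem_union.2 (Or.inr (Finset.mem_erase.2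
              ⟨by omega, List.mem_toFinset.2 hR⟩))
        have hc1 : (T.flatten.toFinset.filter fun a => s ≤ a ∧ a < s').card ≤ n₀ := by
          have he : (T.flatten.filter fun a => decide (s ≤ a ∧ a < s')).toFinset =
              T.flatten.toFinset.filter fun a => s ≤ a ∧ a < s' := by
            ext a
            simp only [List.mem_toFinset, Finset.mem_filter, List.mem_filter,
              decide_eq_true_eq]
          calc (T.flatten.toFinset.filter fun a => s ≤ a ∧ a < s').card
              = (T.flatten.filter fun a => decide (s ≤ a ∧ a < s')).toFinset.card := by
                rw [he]
            _ ≤ (T.flatten.filter fun a => decide (s ≤ a ∧ a < s')).length :=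
                List.toFinset_card_le _
            _ ≤ n₀ := hn
        have hc2 : (rs.toFinset.erase v).card ≤ k - 2 := by
          rw [Finset.card_erase_of_mem (List.mem_toFinset.2 hvrs),
            List.toFinset_card_of_nodup hnd]
          omega
        have hcard : (U.flatten.toFinset.filter fun a => v < a ∧ a < s').card ≤
            n₀ + (k - 2) := by
          calc (U.flatten.toFinset.filter fun a => v < a ∧ a < s').card
              ≤ ((T.flatten.toFinset.filter fun a => s ≤ a ∧ a < s') ∪
                  (rs.toFinset.erase v)).card := Finset.card_le_card hsubF
            _ ≤ (T.flatten.toFinset.filter fun a => s ≤ a ∧ a < s').card +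
                  (rs.toFinset.erase v).card := Finset.card_union_le _ _
            _ ≤ n₀ + (k - 2) := by omega
        rw [colIndex_eq]
        omega

/-- Lemma 2.2(2) of Lanini–McNamara: in the column-insertion setup of Lemma 2.2, if `s'`
is an entry of `T` with `s' > s`, `m = max (c_T s) k` and `n₀` is the number of entries of
`T` in `[s, s')`, then either `c_{T'} s' = c_T s'` or `c_{T'} s' ≤ m + n₀`. -/
theorem column_after_insertion_of_larger_entry (T : List (List ℕ)) (hT : ColsStandard T)
    (s r k : ℕ)
    (hs : s ∈ T.flatten) (hgap : ∀ a ∈ T.flatten, ¬(r < a ∧ a < s))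
    (hk : 0 < k) (hks : k ≤ s - r)
    (rs : List ℕ) (hlen : rs.length = k - 1) (hsort : rs.Pairwise (· < ·))
    (hmem : ∀ a ∈ rs, r < a ∧ a < s)
    (T' : List (List ℕ)) (hT' : T' = rs.reverse.foldl (fun U v => insertCol v U) T)
    (s' : ℕ) (hs' : s' ∈ T.flatten) (hss' : s < s')
    (m n₀ : ℕ) (hm : m = max (colIndex T s) k)
    (hn : n₀ = (T.flatten.filter fun a => decide (s ≤ a ∧ a < s')).length) :
    colIndex T' s' = colIndex T s' ∨ colIndex T' s' ≤ m + n₀ := by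
  subst hT'
  exact fold_invariant T r s s' k m n₀ rs hlen hsort.nodup hmem hgap hss'
    (hm ▸ le_max_right _ _) (le_of_eq hn.symm) rs.reverse T
    (fun v hv => List.mem_reverse.1 hv) hs' (fun a ha => Or.inl ha) (Or.inl rfl)
end

section
/- In the construction of Theorem 2.4 (given x, y ∈ S_n, producing v, w ∈ S_N in the same right cell whose last-n patterns are x and y), one can always take N ≤ n(n+1)/2. -/
namespace LM

def tri : ℕ → ℕ
  | 0 => 0
  | n+1 => tri n + n + 1

def hv (m : ℕ) : ℕ := tri m + m

lemma tri_mono : StrictMono tri := strictMono_nat_of_lt_succ (fun n => by simp [tri])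

lemma hv_mono : StrictMono hv :=
  strictMono_nat_of_lt_succ (fun n => by simp [hv, tri]; omega)

lemma hv_succ (m : ℕ) : hv m + 1 = tri (m+1) := by simp [hv, tri]

lemma hv_lt_tri {j n : ℕ} (h : j < n) : hv j < tri n := by
  have h1 : hv j < tri (j+1) := by simp [hv, tri]
  have h2 : tri (j+1) ≤ tri n := tri_mono.le_iff_le.mpr h
  omega

def pref : ℕ → List ℕ
  | 0 => []
  | n+1 => List.range' (tri n) n ++ pref n

def Pins (w : List ℕ) : List (List ℕ) := w.foldr insertCol []

def tcol (n j : ℕ) : List ℕ := (List.range (n - j)).map fun i => tri (i + j) + j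

def TT (n : ℕ) : List (List ℕ) := (List.range n).map (tcol n)

lemma tcol_lt {n j : ℕ} : ∀ a ∈ tcol n j, a < tri n := by
  intro a ha
  simp only [tcol, List.mem_map, List.mem_range] at ha
  obtain ⟨i, hi, rfl⟩ := ha
  have h1 : i + j < n := by omega
  have := hv_mono.le_iff_le.mpr (Nat.le_of_lt_succ (Nat.lt_succ_of_lt h1))
  have h2 : hv (i + j) < tri n := hv_lt_tri h1
  simp only [hv] at h2; omega

lemma tcol_succ {n j : ℕ} (h : j ≤ n) : tcol (n+1) j = tcol n j ++ [tri n + j] := by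
  have : n + 1 - j = (n - j) + 1 := by omega
  rw [tcol, this, List.range_succ, List.map_append, ← tcol]
  congr 2
  simp; congr 1; omega

/-! basic insertCol lemmas -/

lemma find?_last {p : ℕ → Bool} {c : List ℕ} {b : ℕ} (hc : ∀ a ∈ c, p a = false)
    (hb : p b = true) : (c ++ [b]).find? p = some b := by
  induction c with
  | nil => simp [List.find?, hb]
  | cons a c ih =>
      have ha := hc a (by simp)
      simp only [List.cons_append, List.find?, ha]
      exact ih (fun x hx => hc x (by simp [hx]))

lemma map_replace_last {c : List ℕ} {b v : ℕ} (hb : b ∉ c) :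
    (c ++ [b]).map (fun y => if y = b then v else y) = c ++ [v] := by
  rw [List.map_append]
  congr 1
  · exact (List.map_congr_left (fun a ha => if_neg (by rintro rfl; exact hb ha))).trans
      (List.map_id c)
  · simp

lemma insertCol_app {v : ℕ} {c : List ℕ} {cs : List (List ℕ)} (h : ∀ a ∈ c, a < v) :
    insertCol v (c :: cs) = (c ++ [v]) :: cs := by
  have : c.find? (fun x => v < x) = none := by
    rw [List.find?_eq_none]; intro x hx; simpa using Nat.le_of_lt (h x hx)
  simp [insertCol, this]

lemma insertCol_bump {v b : ℕ} {c : List ℕ} {cs : List (List ℕ)}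
    (h : ∀ a ∈ c, a < v) (hvb : v < b) :
    insertCol v ((c ++ [b]) :: cs) = (c ++ [v]) :: insertCol b cs := by
  have hf : (c ++ [b]).find? (fun x => v < x) = some b := by
    apply find?_last
    · intro a ha; simpa using Nat.le_of_lt (h a ha)
    · simpa using hvb
  have hb : b ∉ c := fun hbc => absurd (h b hbc) (by omega)
  simp [insertCol, hf, map_replace_last hb]

lemma mem_insertCol {a v : ℕ} : ∀ {T : List (List ℕ)},
    a ∈ (insertCol v T).flatten → a = v ∨ a ∈ T.flatten := by
  intro T
  induction T generalizing v with
  | nil => intro h; simp [insertCol] at h; simp [h]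
  | cons c cs ih =>
      intro h
      rcases hf : c.find? (fun x => v < x) with _ | x
      · simp only [insertCol, hf, List.flatten_cons, List.mem_append, List.mem_singleton] at h
        simp only [List.flatten_cons, List.mem_append]
        tauto
      · simp only [insertCol, hf] at h
        simp only [List.flatten_cons, List.mem_append, List.mem_map] at h
        rcases h with ⟨y, hy, hrep⟩ | h
        · by_cases hyx : y = x
          · simp [hyx] at hrep; left; exact hrep.symm
          · simp [hyx] at hrep; right; simp [← hrep]; exact Or.inl hy
        · rcases ih h with rfl | h
          · right; simp [List.mem_of_find?_eq_some hf]
          · right; simp [h]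

lemma insertCol_max {M : ℕ} {T : List (List ℕ)} (h : ∀ a ∈ T.flatten, a < M) :
    insertCol M T = placeAt M 0 T := by
  cases T with
  | nil => rfl
  | cons c cs =>
      rw [insertCol_app (fun a ha => h a (by simp [ha]))]; rfl

lemma placeAt_of_le {M : ℕ} : ∀ {l : List (List ℕ)} {c : ℕ}, l.length ≤ c →
    placeAt M c l = l ++ [[M]] := by
  intro l
  induction l with
  | nil => intro c _; cases c <;> rfl
  | cons a l ih =>
      intro c hc
      cases c with
      | zero => simp at hc
      | succ c => simp only [placeAt, List.cons_append, List.cons.injEq, true_and]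
                  exact ih (by simpa using hc)


lemma bound_insertCol {M v : ℕ} {T : List (List ℕ)} (hv : v < M)
    (hT : ∀ a ∈ T.flatten, a < M) : ∀ a ∈ (insertCol v T).flatten, a < M := by
  intro a ha
  rcases mem_insertCol ha with rfl | h
  · exact hv
  · exact hT a h

lemma bound_foldr {M : ℕ} {u : List ℕ} {T : List (List ℕ)} (hu : ∀ v ∈ u, v < M)
    (hT : ∀ a ∈ T.flatten, a < M) : ∀ a ∈ (u.foldr insertCol T).flatten, a < M := by
  induction u with
  | nil => exact hT
  | cons v u ih =>
      exact bound_insertCol (hu v (by simp)) (ih (fun w hw => hu w (by simp [hw])))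

lemma placeAt_succ_cons (M c : ℕ) (col : List ℕ) (cs : List (List ℕ)) :
    placeAt M (c+1) (col :: cs) = col :: placeAt M c cs := rfl

lemma find?_append_left {p : ℕ → Bool} {l : List ℕ} {x : ℕ} (h : l.find? p = some x)
    (l' : List ℕ) : (l ++ l').find? p = some x := by
  induction l with
  | nil => simp at h
  | cons a l ih =>
      rcases ha : p a with _ | _
      · rw [List.find?_cons_of_neg (p := p) (a := a) (by simp [ha])] at h
        rw [List.cons_append, List.find?_cons_of_neg (p := p) (a := a) (by simp [ha])]
        exact ih h
      · rw [List.find?_cons_of_pos (p := p) (a := a) (by simp [ha])] at h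
        rw [List.cons_append, List.find?_cons_of_pos (p := p) (a := a) (by simp [ha])]
        exact h

lemma peel {M : ℕ} : ∀ (c : ℕ) {T : List (List ℕ)} {v : ℕ}, v < M →
    (∀ a ∈ T.flatten, a < M) →
    ∃ c', insertCol v (placeAt M c T) = placeAt M c' (insertCol v T) := by
  have hnilcase : ∀ (v : ℕ), v < M → insertCol v [[M]] = placeAt M 1 (insertCol v []) := by
    intro v hvM
    rw [show ([[M]] : List (List ℕ)) = ([] ++ [M]) :: [] by simp,
      insertCol_bump (by simp) hvM]
    rfl
  intro c
  induction c with
  | zero =>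
      intro T v hvM hT
      cases T with
      | nil => exact ⟨1, hnilcase v hvM⟩
      | cons col cs =>
          have hcol : ∀ a ∈ col, a < M := fun a ha => hT a (by
            simp only [List.flatten_cons, List.mem_append]; exact Or.inl ha)
          have hcs : ∀ a ∈ cs.flatten, a < M := fun a ha => hT a (by
            simp only [List.flatten_cons, List.mem_append]; exact Or.inr ha)
          show ∃ c', insertCol v ((col ++ [M]) :: cs) = _
          rcases hf : col.find? (fun x => decide (v < x)) with _ | x
          · refine ⟨1, ?_⟩
            have hnone : ∀ a ∈ col, (fun x => decide (v < x)) a = false := by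
              intro a ha
              have := List.find?_eq_none.mp hf a ha
              simpa using this
            have hfind2 : (col ++ [M]).find? (fun x => decide (v < x)) = some M :=
              find?_last hnone (by simpa using hvM)
            have hMcol : M ∉ col := fun hm => absurd (hcol M hm) (lt_irrefl M)
            simp only [insertCol, hfind2, hf, map_replace_last hMcol,
              insertCol_max hcs]
            rfl
          · refine ⟨0, ?_⟩
            have hfind2 : (col ++ [M]).find? (fun x => decide (v < x)) = some x :=
              find?_append_left hf [M]
            have hMne : M ≠ x := by
              have := hcol x (List.mem_of_find?_eq_some hf); omega
            simp only [insertCol, hfind2, hf]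
            rw [List.map_append]
            simp only [List.map_cons, List.map_nil, if_neg hMne]
            rfl
  | succ c ih =>
      intro T v hvM hT
      cases T with
      | nil => exact ⟨1, hnilcase v hvM⟩
      | cons col cs =>
          have hcs : ∀ a ∈ cs.flatten, a < M := fun a ha => hT a (by
            simp only [List.flatten_cons, List.mem_append]; exact Or.inr ha)
          show ∃ c', insertCol v (col :: placeAt M c cs) = _
          rcases hf : col.find? (fun x => decide (v < x)) with _ | x
          · exact ⟨c + 1, by simp only [insertCol, hf, placeAt_succ_cons]⟩
          · have hxM : x < M := hT x (by
              simp only [List.flatten_cons, List.mem_append]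
              exact Or.inl (List.mem_of_find?_eq_some hf))
            obtain ⟨c'', hc''⟩ := ih (T := cs) hxM hcs
            refine ⟨c'' + 1, ?_⟩
            simp only [insertCol, hf, hc'']
            rfl

lemma foldpeel {M : ℕ} : ∀ (u : List ℕ) {T : List (List ℕ)} (c : ℕ), (∀ v ∈ u, v < M) →
    (∀ a ∈ T.flatten, a < M) →
    ∃ c', u.foldr insertCol (placeAt M c T) = placeAt M c' (u.foldr insertCol T) := by
  intro u
  induction u with
  | nil => intro T c _ _; exact ⟨c, rfl⟩
  | cons v u ih =>
      intro T c hu hT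
      have hu' : ∀ w ∈ u, w < M := fun w hw => hu w (by simp [hw])
      obtain ⟨c1, hc1⟩ := ih c hu' hT
      obtain ⟨c2, hc2⟩ := peel c1 (hu v (by simp)) (bound_foldr hu' hT)
      exact ⟨c2, by simp only [List.foldr_cons, hc1, hc2]⟩

/-! the sweep -/

def SC (n b k c : ℕ) : List (List ℕ) :=
  (List.range n).map
    (fun j => tcol n j ++ (if j < k then [b + j] else []) ++ (if j = max c k then [hv n] else []))
  ++ (if max c k = n then [[hv n]] else [])

lemma placeAt_range_map (M : ℕ) (g : ℕ → List ℕ) :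
    ∀ (c s len : ℕ), c ≤ len →
    placeAt M c ((List.range' s len).map g) =
      (List.range' s len).map (fun j => g j ++ if j = s + c then [M] else []) ++
        (if c = len then [[M]] else []) := by
  intro c
  induction c with
  | zero =>
      intro s len _
      cases len with
      | zero => rfl
      | succ len =>
          rw [List.range'_succ, List.map_cons]
          show (g s ++ [M]) :: _ = _
          rw [List.map_cons, if_pos (by omega : s = s + 0),
            if_neg (by omega : ¬ (0 = len + 1)), List.append_nil]
          congr 1
          refine (List.map_congr_left ?_).symm
          intro j hj
          have := List.mem_range'_1.mp hj
          rw [if_neg (by omega), List.append_nil]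
  | succ c ih =>
      intro s len hc
      cases len with
      | zero => omega
      | succ len =>
          rw [List.range'_succ, List.map_cons, placeAt_succ_cons, ih (s+1) len (by omega)]
          have e1 : (List.range' (s+1) len).map (fun j => g j ++ if j = s + 1 + c then [M] else [])
              = (List.range' (s+1) len).map (fun j => g j ++ if j = s + (c+1) then [M] else []) := by
            refine List.map_congr_left (fun j _ => ?_)
            by_cases h : j = s + 1 + c
            · rw [if_pos h, if_pos (by omega)]
            · rw [if_neg h, if_neg (by omega)]
          have e2 : (if c = len then ([[M]] : List (List ℕ)) else [])
              = (if c + 1 = len + 1 then [[M]] else []) := by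
            by_cases h : c = len
            · rw [if_pos h, if_pos (by omega)]
            · rw [if_neg h, if_neg (by omega)]
          rw [e1, e2]
          simp only [List.map_cons, List.cons_append, List.append_nil,
            if_neg (show ¬ (s = s + (c+1)) from by omega)]

lemma cascade_run (n : ℕ) : ∀ (k j₀ v : ℕ) (rest : List (List ℕ)), tri n ≤ v →
    insertCol v ((List.range k).map (fun i => tcol n (j₀+i) ++ [v + 1 + i]) ++ rest) =
      (List.range k).map (fun i => tcol n (j₀+i) ++ [v + i]) ++ insertCol (v + k) rest := by
  intro k
  induction k with
  | zero => intro j₀ v rest _; simp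
  | succ k ih =>
      intro j₀ v rest hle
      rw [List.range_succ_eq_map]
      simp only [List.map_cons, List.map_map, List.cons_append]
      have htc : ∀ a ∈ tcol n (j₀ + 0), a < v :=
        fun a ha => lt_of_lt_of_le (tcol_lt a ha) hle
      rw [insertCol_bump htc (by omega)]
      have hmap1 : (List.range k).map
            ((fun i => tcol n (j₀+i) ++ [v + 1 + i]) ∘ Nat.succ)
          = (List.range k).map (fun i => tcol n ((j₀+1)+i) ++ [(v+1) + 1 + i]) := by
        refine List.map_congr_left (fun i _ => ?_)
        simp only [Function.comp]
        rw [show j₀ + Nat.succ i = (j₀+1)+i from by omega,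
          show v + 1 + Nat.succ i = (v+1)+1+i from by omega]
      rw [show v + 1 + 0 = v + 1 from by omega, hmap1, ih (j₀+1) (v+1) rest (by omega)]
      have hmap2 : (List.range k).map
            ((fun i => tcol n (j₀+i) ++ [v + i]) ∘ Nat.succ)
          = (List.range k).map (fun i => tcol n ((j₀+1)+i) ++ [(v+1) + i]) := by
        refine List.map_congr_left (fun i _ => ?_)
        simp only [Function.comp]
        rw [show j₀ + Nat.succ i = (j₀+1)+i from by omega,
          show v + Nat.succ i = (v+1)+i from by omega]
      rw [hmap2, show v + 0 = v from by omega,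
        show v + (k+1) = (v+1)+k from by omega]

lemma range_map_split {α : Type} (F : ℕ → α) {k n : ℕ} (h : k < n) :
    (List.range n).map F
      = (List.range k).map F ++ F k :: (List.range' (k+1) (n-k-1)).map F := by
  conv_lhs => rw [List.range_eq_range', show n = (n - k - 1 + 1) + k from by omega]
  rw [Nat.add_comm (n - k - 1 + 1) k, ← List.range'_append (s := 0) (m := k) (n := n - k - 1 + 1) (step := 1), List.map_append]
  congr 1
  · rw [← List.range_eq_range']
  · rw [show (0 + 1 * k) = k from by omega,
      show List.range' k (n - k - 1 + 1) = k :: List.range' (k+1) (n-k-1) from List.range'_succ (s := k) (n := n-k-1) (step := 1),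
      List.map_cons]

lemma STEP (n v k c : ℕ) (hsum : v + k + 1 = tri n + n) (hk : k < n) (hc : c ≤ n) :
    insertCol v (SC n (v+1) k c) = SC n v (k+1) c := by
  have htriv : tri n ≤ v := by omega
  have htcol : ∀ j, ∀ a ∈ tcol n j, a < v :=
    fun j a ha => lt_of_lt_of_le (tcol_lt a ha) htriv
  have hM : hv n = tri n + n := rfl
  have hflat : ∀ a ∈ ((List.range' (k+1) (n-k-1)).map (tcol n)).flatten, a < hv n := by
    intro a ha
    simp only [List.mem_flatten, List.mem_map] at ha
    obtain ⟨l, ⟨j, _, rfl⟩, hal⟩ := ha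
    have := tcol_lt a hal
    show a < tri n + n
    omega
  by_cases hck : c ≤ k
  · -- M sits at column k
    have hmax1 : max c k = k := max_eq_right hck
    have hmax2 : max c (k+1) = k + 1 := max_eq_right (by omega)
    have split1 : SC n (v+1) k c
        = (List.range k).map (fun i => tcol n (0+i) ++ [(v+1) + i])
          ++ ((tcol n k ++ [hv n]) :: (List.range' (k+1) (n-k-1)).map (tcol n)) := by
      unfold SC
      rw [hmax1, if_neg (by omega : ¬ (k = n)), List.append_nil, range_map_split _ hk]
      congr 1
      · refine List.map_congr_left (fun j hj => ?_)
        have := List.mem_range.mp hj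
        rw [if_pos this, if_neg (by omega), List.append_nil, show (0:ℕ)+j = j from by omega]
      · congr 1
        · rw [if_neg (by omega : ¬ (k < k)), if_pos rfl, List.append_nil]
        · refine List.map_congr_left (fun j hj => ?_)
          have := List.mem_range'_1.mp hj
          rw [if_neg (by omega), if_neg (by omega), List.append_nil, List.append_nil]
    have split2 : SC n v (k+1) c
        = (List.range k).map (fun i => tcol n (0+i) ++ [v + i])
          ++ ((tcol n k ++ [v + k]) ::
            ((List.range' (k+1) (n-k-1)).map (fun j => tcol n j ++ if j = (k+1) + 0 then [hv n] else [])
              ++ (if 0 = n - k - 1 then [[hv n]] else []))) := by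
      unfold SC
      rw [hmax2, range_map_split _ hk]
      have et : (if k + 1 = n then ([[hv n]] : List (List ℕ)) else [])
          = (if 0 = n - k - 1 then [[hv n]] else []) := by
        by_cases h : k + 1 = n
        · rw [if_pos h, if_pos (by omega)]
        · rw [if_neg h, if_neg (by omega)]
      rw [et, List.append_assoc, List.cons_append]
      congr 1
      · refine List.map_congr_left (fun j hj => ?_)
        have := List.mem_range.mp hj
        rw [if_pos (by omega), if_neg (by omega), List.append_nil, show (0:ℕ)+j = j from by omega]
      · congr 1
        · rw [if_pos (by omega : k < k + 1), if_neg (by omega : ¬ (k = k + 1)), List.append_nil]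
        · congr 1
          refine List.map_congr_left (fun j hj => ?_)
          have := List.mem_range'_1.mp hj
          rw [if_neg (by omega), List.append_nil, show (k+1) + 0 = k + 1 from rfl]
    rw [split1, split2, cascade_run n k 0 v _ htriv,
      insertCol_bump (fun a ha => lt_of_lt_of_le (htcol k a ha) (by omega)) (by omega : v + k < hv n),
      insertCol_max hflat,
      placeAt_range_map (hv n) (tcol n) 0 (k+1) (n-k-1) (by omega)]
  · -- k < c : M sits at column c
    have hkc : k < c := by omega
    have hmax1 : max c k = c := max_eq_left (by omega)
    have hmax2 : max c (k+1) = c := max_eq_left (by omega)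
    have split1 : SC n (v+1) k c
        = (List.range k).map (fun i => tcol n (0+i) ++ [(v+1) + i])
          ++ (tcol n k ::
            ((List.range' (k+1) (n-k-1)).map (fun j => tcol n j ++ if j = c then [hv n] else [])
              ++ (if c = n then [[hv n]] else []))) := by
      unfold SC
      rw [hmax1, range_map_split _ hk, List.append_assoc, List.cons_append]
      congr 1
      · refine List.map_congr_left (fun j hj => ?_)
        have := List.mem_range.mp hj
        rw [if_pos this, if_neg (by omega), List.append_nil, show (0:ℕ)+j = j from by omega]
      · congr 1
        · rw [if_neg (by omega : ¬ (k < k)), if_neg (by omega : ¬ (k = c)), List.append_nil,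
            List.append_nil]
        · congr 1
          refine List.map_congr_left (fun j hj => ?_)
          have := List.mem_range'_1.mp hj
          rw [if_neg (by omega), List.append_nil]
    have split2 : SC n v (k+1) c
        = (List.range k).map (fun i => tcol n (0+i) ++ [v + i])
          ++ ((tcol n k ++ [v + k]) ::
            ((List.range' (k+1) (n-k-1)).map (fun j => tcol n j ++ if j = c then [hv n] else [])
              ++ (if c = n then [[hv n]] else []))) := by
      unfold SC
      rw [hmax2, range_map_split _ hk, List.append_assoc, List.cons_append]
      congr 1
      · refine List.map_congr_left (fun j hj => ?_)
        have := List.mem_range.mp hj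
        rw [if_pos (by omega), if_neg (by omega), List.append_nil, show (0:ℕ)+j = j from by omega]
      · congr 1
        · rw [if_pos (by omega : k < k + 1), if_neg (by omega : ¬ (k = c)), List.append_nil]
        · congr 1
          refine List.map_congr_left (fun j hj => ?_)
          have := List.mem_range'_1.mp hj
          rw [if_neg (by omega), List.append_nil]
    rw [split1, split2, cascade_run n k 0 v _ htriv,
      insertCol_app (fun a ha => lt_of_lt_of_le (htcol k a ha) (by omega))]

lemma SC_base (n c : ℕ) (hc : c ≤ n) : SC n (tri n) n c = TT (n+1) := by
  unfold SC TT
  rw [max_eq_right hc, if_pos rfl, List.range_succ, List.map_append]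
  congr 1
  · refine List.map_congr_left (fun j hj => ?_)
    have hjn := List.mem_range.mp hj
    rw [if_pos hjn, if_neg (by omega), List.append_nil, tcol_succ (by omega)]
  · rw [List.map_cons, List.map_nil]
    congr 1
    show ([hv n] : List ℕ) = tcol (n+1) n
    rw [tcol, show n + 1 - n = 1 from by omega]
    simp [hv, show List.range 1 = [0] from rfl]

lemma SW (n : ℕ) : ∀ m c, m ≤ n → c ≤ n →
    List.foldr insertCol (SC n (tri n + m) (n - m) c) (List.range' (tri n) m) = TT (n+1) := by
  intro m
  induction m with
  | zero =>
      intro c _ hc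
      simpa using SC_base n c hc
  | succ m ih =>
      intro c hm hc
      rw [List.range'_concat, List.foldr_append]
      have hstep := STEP n (tri n + m) (n - m - 1) c (by omega) (by omega) hc
      rw [show tri n + 1 * m = tri n + m from by omega]
      show List.foldr insertCol
        (insertCol (tri n + m) (SC n (tri n + (m+1)) (n - (m+1)) c)) (List.range' (tri n) m) = _
      rw [show tri n + (m + 1) = tri n + m + 1 from rfl, show n - (m+1) = n - m - 1 from rfl, hstep,
        show n - m - 1 + 1 = n - m from by omega]
      exact ih c (by omega) hc

/-! core -/

lemma pref_lt : ∀ n, ∀ v ∈ pref n, v < tri n := by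
  intro n
  induction n with
  | zero => intro v hv; simp [pref] at hv
  | succ n ih =>
      intro v hv
      have htr : tri (n+1) = tri n + n + 1 := rfl
      rcases List.mem_append.mp hv with h | h
      · have := List.mem_range'_1.mp h; omega
      · have := ih v h; omega

lemma Pins_append (u w : List ℕ) : Pins (u ++ w) = u.foldr insertCol (Pins w) :=
  List.foldr_append

lemma Pins_mem {w : List ℕ} : ∀ a ∈ (Pins w).flatten, a ∈ w := by
  induction w with
  | nil => intro a ha; simp [Pins] at ha
  | cons v w ih =>
      intro a ha
      rcases mem_insertCol ha with rfl | h
      · simp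
      · simp only [List.mem_cons]; exact Or.inr (ih a h)

lemma core : ∀ n (a : List ℕ), a.Nodup → (∀ v ∈ a, v < n) → a.length = n →
    Pins (pref n ++ a.map hv) = TT n := by
  intro n
  induction n with
  | zero =>
      intro a _ _ hlen
      rw [List.length_eq_zero_iff.mp hlen]
      rfl
  | succ n ih =>
      intro a hnd hlt hlen
      have hmem : n ∈ a := by
        by_contra hn
        have hsub : a.toFinset ⊆ Finset.range n := by
          intro v hvm
          rw [List.mem_toFinset] at hvm
          rw [Finset.mem_range]
          have := hlt v hvm
          rcases Nat.lt_succ_iff_lt_or_eq.mp this with h | rfl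
          · exact h
          · exact absurd hvm hn
        have hcard := Finset.card_le_card hsub
        rw [List.toFinset_card_of_nodup hnd, hlen, Finset.card_range] at hcard
        omega
      obtain ⟨a₁, a₂, rfl⟩ := List.append_of_mem hmem
      have hnd' : (a₁ ++ a₂).Nodup := by
        have : (a₁ ++ a₂).Sublist (a₁ ++ n :: a₂) :=
          List.Sublist.append_left (List.sublist_cons_self n a₂) a₁
        exact hnd.sublist this
      have hna₁ : n ∉ a₁ := by
        intro hin
        have := List.disjoint_of_nodup_append hnd
        exact this hin (by simp)
      have hna₂ : n ∉ a₂ := by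
        have := (List.nodup_append'.mp hnd).2.1
        exact (List.nodup_cons.mp this).1
      have hlt' : ∀ v ∈ a₁ ++ a₂, v < n := by
        intro v hvm
        have hvn : v < n + 1 := hlt v (by
          rcases List.mem_append.mp hvm with h | h
          · exact List.mem_append.mpr (Or.inl h)
          · exact List.mem_append.mpr (Or.inr (by simp [h])))
        rcases Nat.lt_succ_iff_lt_or_eq.mp hvn with h | rfl
        · exact h
        · exfalso
          rcases List.mem_append.mp hvm with h | h
          · exact hna₁ h
          · exact hna₂ h
      have hlen' : (a₁ ++ a₂).length = n := by
        simp only [List.length_append, List.length_cons] at hlen ⊢; omega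
      have hIH := ih (a₁ ++ a₂) hnd' hlt' hlen'
      -- rewrite the word
      have hword : pref (n+1) ++ (a₁ ++ n :: a₂).map hv
          = List.range' (tri n) n ++ ((pref n ++ a₁.map hv) ++ (hv n :: a₂.map hv)) := by
        show (List.range' (tri n) n ++ pref n) ++ _ = _
        simp [List.map_append, List.append_assoc]
      rw [hword, Pins_append, Pins_append]
      have hPins2 : Pins (hv n :: a₂.map hv) = placeAt (hv n) 0 (Pins (a₂.map hv)) := by
        show insertCol (hv n) (Pins (a₂.map hv)) = _
        refine insertCol_max ?_
        intro b hb
        have := Pins_mem b hb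
        simp only [List.mem_map] at this
        obtain ⟨w, hw, rfl⟩ := this
        exact hv_mono (hlt' w (List.mem_append.mpr (Or.inr hw)))
      rw [hPins2]
      have hulo : ∀ w ∈ pref n ++ a₁.map hv, w < hv n := by
        intro w hw
        rcases List.mem_append.mp hw with h | h
        · have h1 := pref_lt n w h
          have : tri n ≤ hv n := by simp [hv]
          omega
        · simp only [List.mem_map] at h
          obtain ⟨u, hu, rfl⟩ := h
          exact hv_mono (hlt' u (List.mem_append.mpr (Or.inl hu)))
      have hTlo : ∀ b ∈ (Pins (a₂.map hv)).flatten, b < hv n := by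
        intro b hb
        have := Pins_mem b hb
        simp only [List.mem_map] at this
        obtain ⟨w, hw, rfl⟩ := this
        exact hv_mono (hlt' w (List.mem_append.mpr (Or.inr hw)))
      obtain ⟨c', hc'⟩ := foldpeel (pref n ++ a₁.map hv) 0 hulo hTlo
      rw [hc']
      have hfold : (pref n ++ a₁.map hv).foldr insertCol (Pins (a₂.map hv)) = TT n := by
        rw [← Pins_append, List.append_assoc, ← List.map_append, hIH]
      rw [hfold]
      -- normalize the column index
      have hTTlen : (TT n).length = n := by simp [TT]
      set c := min c' n with hcdef
      have hcn : c ≤ n := min_le_right _ _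
      have hplc : placeAt (hv n) c' (TT n) = placeAt (hv n) c (TT n) := by
        rcases le_or_gt c' n with h | h
        · rw [hcdef, min_eq_left h]
        · rw [placeAt_of_le (by omega), hcdef, min_eq_right (by omega),
            placeAt_of_le (by omega)]
      rw [hplc]
      have hSC : placeAt (hv n) c (TT n) = SC n (tri n + n) 0 c := by
        rw [TT, List.range_eq_range', placeAt_range_map (hv n) (tcol n) c 0 n hcn, SC]
        rw [max_eq_left (by omega : 0 ≤ c)]
        congr 1
        · rw [← List.range_eq_range']
          refine List.map_congr_left (fun j _ => ?_)
          rw [if_neg (by omega : ¬ (j < 0)), List.append_nil, show (0:ℕ) + c = c from by omega]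
      rw [hSC]
      have := SW n n c (le_refl n) hcn
      rw [show n - n = 0 from by omega] at this
      exact this

/-! glue -/

lemma fst_foldl : ∀ (l : List (ℕ × ℕ)) (PQ : List (List ℕ) × List (List ℕ)),
    (l.foldl (fun PQ p =>
      let P' := insertCol p.2 PQ.1
      (P', placeAt (p.1 + 1) (diffIdx (shapeOf PQ.1) (shapeOf P')) PQ.2)) PQ).1
    = l.foldl (fun T p => insertCol p.2 T) PQ.1 := by
  intro l
  induction l with
  | nil => intro PQ; rfl
  | cons p l ih => intro PQ; exact ih _

lemma Psymb_eq_Pins (w : List ℕ) : Psymb w = Pins w := by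
  show (RSpair w).1 = _
  rw [RSpair, fst_foldl]
  have h1 : (w.reverse.zipIdx.map Prod.swap).foldl (fun T p => insertCol p.2 T) []
      = (w.reverse.zipIdx.map Prod.fst).foldl (fun T v => insertCol v T) [] := by
    rw [List.foldl_map, List.foldl_map]; rfl
  rw [h1, List.zipIdx_map_fst, List.foldl_reverse]
  rfl

lemma insertCol_succ (v : ℕ) : ∀ (T : List (List ℕ)),
    insertCol (v+1) (T.map (List.map (· + 1))) = (insertCol v T).map (List.map (· + 1)) := by
  intro T
  induction T generalizing v with
  | nil => simp [insertCol]
  | cons c cs ih =>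
      have hp : ((fun x => decide (v + 1 < x)) ∘ (· + 1)) = (fun x => decide (v < x)) := by
        funext x
        simp [Nat.add_lt_add_iff_right]
      have hfind : (c.map (· + 1)).find? (fun x => decide (v + 1 < x))
          = Option.map (· + 1) (c.find? (fun x => decide (v < x))) := by
        rw [List.find?_map, hp]
      rcases hf : c.find? (fun x => decide (v < x)) with _ | x
      · rw [hf] at hfind
        simp only [Option.map_none] at hfind
        show insertCol (v+1) ((c.map (· + 1)) :: cs.map (List.map (· + 1))) = _
        simp only [insertCol, hfind, hf]
        simp [List.map_append]
      · rw [hf] at hfind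
        simp only [Option.map_some] at hfind
        show insertCol (v+1) ((c.map (· + 1)) :: cs.map (List.map (· + 1))) = _
        simp only [insertCol, hfind, hf]
        rw [List.map_map, List.map_cons, List.map_map]
        congr 1
        · refine List.map_congr_left (fun a _ => ?_)
          simp only [Function.comp]
          by_cases h : a = x
          · rw [if_pos h, if_pos (by omega)]
          · rw [if_neg (by omega), if_neg h]
        · exact ih x

lemma Pins_succ (w : List ℕ) : Pins (w.map (· + 1)) = (Pins w).map (List.map (· + 1)) := by
  induction w with
  | nil => rfl
  | cons a w ih =>
      show insertCol (a+1) (Pins (w.map (· + 1))) = _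
      rw [ih, insertCol_succ]
      rfl

/-! the construction -/

lemma pref_len : ∀ n, (pref n).length + n = tri n := by
  intro n
  induction n with
  | zero => rfl
  | succ n ih =>
      show (List.range' (tri n) n ++ pref n).length + (n+1) = tri n + n + 1
      rw [List.length_append, List.length_range']
      omega

lemma le_tri : ∀ n, n ≤ tri n := by
  intro n
  induction n with
  | zero => exact le_refl 0
  | succ n ih => show n + 1 ≤ tri n + n + 1; omega

lemma two_tri : ∀ n, 2 * tri n = n * (n+1) := by
  intro n
  induction n with
  | zero => rfl
  | succ n ih =>
      show 2 * (tri n + n + 1) = (n+1) * (n+2)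
      have : (n+1) * (n+2) = n * (n+1) + 2*(n+1) := by ring
      omega

lemma pref_nodup : ∀ n, (pref n).Nodup := by
  intro n
  induction n with
  | zero => exact List.nodup_nil
  | succ n ih =>
      refine List.nodup_append'.mpr ⟨List.nodup_range', ih, ?_⟩
      intro a ha hb
      have h1 := List.mem_range'_1.mp ha
      have h2 := pref_lt n a hb
      omega

lemma pref_ne_hv : ∀ n, ∀ v ∈ pref n, ∀ j, hv j ≠ v := by
  intro n
  induction n with
  | zero => intro v hv; simp [pref] at hv
  | succ n ih =>
      intro v hvm j
      rcases List.mem_append.mp hvm with h | h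
      · have h1 := List.mem_range'_1.mp h
        rcases lt_or_ge j n with hj | hj
        · have := hv_lt_tri hj; omega
        · have h2 : hv n ≤ hv j := hv_mono.le_iff_le.mpr hj
          have h3 : hv n = tri n + n := rfl
          omega
      · exact ih v h j

def word (n : ℕ) (x : Equiv.Perm (Fin n)) : List ℕ :=
  pref n ++ List.ofFn (fun i => hv ((x i : ℕ)))

lemma word_length {n : ℕ} (x : Equiv.Perm (Fin n)) : (word n x).length = tri n := by
  rw [word, List.length_append, List.length_ofFn]
  exact pref_len n

lemma word_lt {n : ℕ} (x : Equiv.Perm (Fin n)) : ∀ v ∈ word n x, v < tri n := by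
  intro v hvm
  rcases List.mem_append.mp hvm with h | h
  · exact pref_lt n v h
  · rw [List.mem_ofFn] at h
    obtain ⟨i, rfl⟩ := h
    exact hv_lt_tri (x i).isLt

lemma word_nodup {n : ℕ} (x : Equiv.Perm (Fin n)) : (word n x).Nodup := by
  refine List.nodup_append'.mpr ⟨pref_nodup n, ?_, ?_⟩
  · rw [List.nodup_ofFn]
    intro i j hij
    exact x.injective (Fin.val_injective (hv_mono.injective hij))
  · intro a ha hb
    rw [List.mem_ofFn] at hb
    obtain ⟨i, hi⟩ := hb
    exact pref_ne_hv n a ha _ hi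

lemma word_core {n : ℕ} (x : Equiv.Perm (Fin n)) : Pins (word n x) = TT n := by
  have := core n (List.ofFn (fun i : Fin n => (x i : ℕ)))
    (List.nodup_ofFn.mpr (fun i j hij => x.injective (Fin.val_injective hij)))
    (by
      intro v hvm
      rw [List.mem_ofFn] at hvm
      obtain ⟨i, rfl⟩ := hvm
      exact (x i).isLt)
    List.length_ofFn
  rw [List.map_ofFn] at this
  exact this

noncomputable def mk {n : ℕ} (x : Equiv.Perm (Fin n)) : Equiv.Perm (Fin (tri n)) :=
  Equiv.ofBijective
    (fun i => (⟨(word n x)[(i : ℕ)]'(by rw [word_length]; exact i.isLt),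
      word_lt x _ (List.getElem_mem _)⟩ : Fin (tri n)))
    (Finite.injective_iff_bijective.mp (fun i j hij => by
      apply Fin.ext
      exact ((word_nodup x).getElem_inj_iff).mp (congrArg Fin.val hij)))

lemma mk_val {n : ℕ} (x : Equiv.Perm (Fin n)) (i : Fin (tri n)) :
    (mk x i : ℕ) = (word n x)[(i : ℕ)]'(by rw [word_length]; exact i.isLt) := rfl

lemma mk_RSP {n : ℕ} (x : Equiv.Perm (Fin n)) :
    RSP (mk x) = (TT n).map (List.map (· + 1)) := by
  have hone : oneLine (mk x) = (word n x).map (· + 1) := by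
    refine List.ext_getElem ?_ ?_
    · simp only [oneLine, List.length_ofFn, List.length_map, word_length]
    · intro i h1 h2
      simp only [oneLine]
      rw [List.getElem_ofFn, List.getElem_map, mk_val]
  rw [RSP, hone, Psymb_eq_Pins, Pins_succ, word_core]

lemma mk_prefix {n : ℕ} (x : Equiv.Perm (Fin n)) (i : Fin (tri n))
    (h : (i : ℕ) < (pref n).length) :
    (mk x i : ℕ) = (pref n)[(i : ℕ)] := by
  rw [mk_val]
  simp only [word]
  rw [List.getElem_append_left h]

lemma mk_suffix {n : ℕ} (x : Equiv.Perm (Fin n)) (k : Fin n)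
    (h : tri n - n + (k : ℕ) < tri n) :
    (mk x ⟨tri n - n + (k : ℕ), h⟩ : ℕ) = hv ((x k : ℕ)) := by
  have hpl := pref_len n
  rw [mk_val]
  simp only [word]
  rw [List.getElem_append_right (by omega), List.getElem_ofFn]
  congr 1
  have harg : tri n - n + (k : ℕ) - (pref n).length = (k : ℕ) := by omega
  exact congrArg (fun t : Fin n => ((x t : ℕ))) (Fin.ext harg)

end LM

/-- Proposition 2.6 of Lanini–McNamara: in Theorem 2.4 one can always take
`N ≤ n (n + 1) / 2`. -/
theorem same_right_cell_with_given_patterns_bound (n : ℕ) (x y : Equiv.Perm (Fin n)) :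
    ∃ N, ∃ hN : n ≤ N, N ≤ n * (n + 1) / 2 ∧ ∃ v w : Equiv.Perm (Fin N),
      RSP v = RSP w ∧
      (∀ i : Fin N, (i : ℕ) < N - n → v i = w i) ∧
      (∀ i j : Fin n, i < j →
        ((v ⟨N - n + i, by have := i.isLt; omega⟩ : ℕ) <
            (v ⟨N - n + j, by have := j.isLt; omega⟩ : ℕ) ↔ (x i : ℕ) < x j)) ∧
      (∀ i j : Fin n, i < j →
        ((w ⟨N - n + i, by have := i.isLt; omega⟩ : ℕ) <
            (w ⟨N - n + j, by have := j.isLt; omega⟩ : ℕ) ↔ (y i : ℕ) < y j)) := by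
  have hpl := LM.pref_len n
  refine ⟨LM.tri n, LM.le_tri n, ?_, LM.mk x, LM.mk y, ?_, ?_, ?_, ?_⟩
  · have := LM.two_tri n
    omega
  · rw [LM.mk_RSP, LM.mk_RSP]
  · intro i hi
    apply Fin.ext
    rw [LM.mk_prefix x i (by omega), LM.mk_prefix y i (by omega)]
  · intro i j hij
    rw [LM.mk_suffix x i, LM.mk_suffix x j]
    exact LM.hv_mono.lt_iff_lt
  · intro i j hij
    rw [LM.mk_suffix y i, LM.mk_suffix y j]
    exact LM.hv_mono.lt_iff_lt
end

section
/- Let x ≤ y in S_n and v ≤ w in S_m with a common embedding Φ = {φ_1 < ... < φ_n} of x into v and of y into w, such that v and w agree outside Φ. If ℓ(w) - ℓ(v) = ℓ(y) - ℓ(x), then the Bruhat intervals [x,y] and [v,w] are isomorphic as posets. -/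
open Finset

section Aux
variable {n m : ℕ}

lemma filterSplit {α : Type*} [DecidableEq α] (s : Finset α) (P Q : α → Prop)
    [DecidablePred P] [DecidablePred Q] :
    (s.filter P).card = (s.filter fun a => P a ∧ Q a).card +
      (s.filter fun a => P a ∧ ¬ Q a).card := by
  rw [← Finset.card_filter_add_card_filter_not (s := s.filter P) (p := Q),
    Finset.filter_filter, Finset.filter_filter]

lemma mem_iff_lt_card_of_downClosed {S : Finset (Fin n)}
    (h : ∀ j k : Fin n, j ≤ k → k ∈ S → j ∈ S) (j : Fin n) :
    j ∈ S ↔ (j : ℕ) < S.card := by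
  constructor
  · intro hj
    have hsub : Finset.Iic j ⊆ S := fun k hk => h k j (Finset.mem_Iic.mp hk) hj
    have := Finset.card_le_card hsub
    rw [Fin.card_Iic] at this; omega
  · intro hj
    by_contra hjS
    have hsub : S ⊆ Finset.Iio j := by
      intro k hk
      rw [Finset.mem_Iio]
      rcases lt_or_ge k j with h' | h'
      · exact h'
      · exact absurd (h j k h' hk) hjS
    have := Finset.card_le_card hsub
    rw [Fin.card_Iio] at this; omega

lemma strictMono_eq_of_image_eq {α : Type*} [LinearOrder α] [DecidableEq α] {f g : Fin n → α}
    (hf : StrictMono f) (hg : StrictMono g)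
    (h : Finset.image f Finset.univ = Finset.image g Finset.univ) : f = g := by
  have hcard : (Finset.image f Finset.univ).card = n := by
    rw [Finset.card_image_of_injective _ hf.injective, Finset.card_univ, Fintype.card_fin]
  have h1 := Finset.orderEmbOfFin_unique hcard
    (fun x => Finset.mem_image_of_mem f (Finset.mem_univ x)) hf
  have h2 := Finset.orderEmbOfFin_unique hcard
    (fun x => h ▸ Finset.mem_image_of_mem g (Finset.mem_univ x)) hg
  funext i
  rw [show f i = (fun x => f x) i from rfl, h1, h2]

noncomputable def patchFun (φ : Fin n → Fin m) (v : Fin m → Fin m) (g : Fin n → Fin m) : Fin m → Fin m :=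
  fun i => if h : ∃ j, φ j = i then g h.choose else v i

lemma patchFun_mem {φ : Fin n → Fin m} (hφ : Function.Injective φ)
    (v g : _) (j : Fin n) : patchFun φ v g (φ j) = g j := by
  unfold patchFun
  have h : ∃ k, φ k = φ j := ⟨j, rfl⟩
  rw [dif_pos h]
  congr 1
  exact hφ h.choose_spec

lemma patchFun_not {φ : Fin n → Fin m} {i : Fin m} (hi : ∀ j, φ j ≠ i)
    (v g : _) : patchFun φ v g i = v i := by
  unfold patchFun
  rw [dif_neg]
  rintro ⟨j, hj⟩
  exact hi j hj

end Aux

open Finset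

section Rank
variable {n m : ℕ}

/-- rank count -/
def rkC {m : ℕ} (f : Fin m → ℕ) (p q : ℕ) : ℕ :=
  (Finset.univ.filter fun i : Fin m => (i : ℕ) ≤ p ∧ q ≤ f i).card

lemma rankLE_iff_rkC {f g : Fin m → ℕ} :
    rankLE f g ↔ ∀ p q : ℕ, rkC f p q ≤ rkC g p q := Iff.rfl

lemma filterSplit' {α : Type*} (s : Finset α) (P Q : α → Prop)
    [DecidablePred P] [DecidablePred Q] :
    (s.filter P).card = (s.filter fun a => P a ∧ Q a).card +
      (s.filter fun a => P a ∧ ¬ Q a).card := by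
  rw [← Finset.card_filter_add_card_filter_not (s := s.filter P) (p := Q),
    Finset.filter_filter, Finset.filter_filter]

lemma rk_split (φ : Fin n → Fin m) (hφ : StrictMono φ) (f : Fin m → ℕ) (p q : ℕ) :
    rkC f p q =
      ((Finset.univ : Finset (Fin n)).filter fun j => (φ j : ℕ) ≤ p ∧ q ≤ f (φ j)).card +
      ((Finset.univ : Finset (Fin m)).filter fun i =>
        (∀ j, φ j ≠ i) ∧ ((i : ℕ) ≤ p ∧ q ≤ f i)).card := by
  classical
  unfold rkC
  rw [filterSplit' (Finset.univ : Finset (Fin m)) _ (fun i => ∃ j, φ j = i)]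
  congr 1
  · -- in-part
    refine (Finset.card_nbij (i := fun j => φ j) ?_ ?_ ?_).symm
    · intro j hj
      simp only [Finset.mem_coe, Finset.mem_filter, Finset.mem_univ, true_and] at hj ⊢
      exact ⟨hj, ⟨j, rfl⟩⟩
    · intro a _ b _ hab
      exact hφ.injective hab
    · intro i hi
      simp only [Finset.coe_filter, Set.mem_setOf_eq, Finset.mem_univ, true_and] at hi
      obtain ⟨⟨h1, h2⟩, j, rfl⟩ := hi
      exact ⟨j, by simp [h1, h2], rfl⟩
  · apply Finset.card_bij' (i := fun a _ => a) (j := fun a _ => a)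
    · intro a ha
      simp only [Finset.mem_filter, Finset.mem_univ, true_and, not_exists] at ha ⊢
      tauto
    · intro a ha
      simp only [Finset.mem_filter, Finset.mem_univ, true_and, not_exists] at ha ⊢
      tauto
    · intros; rfl
    · intros; rfl

/-- number of Φ-positions ≤ p -/
def tOf (φ : Fin n → Fin m) (p : ℕ) : ℕ :=
  ((Finset.univ : Finset (Fin n)).filter fun j => (φ j : ℕ) ≤ p).card

/-- value threshold -/
def sOf (ν : Fin n → Fin m) (q : ℕ) : ℕ :=
  n - ((Finset.univ : Finset (Fin n)).filter fun r => q ≤ (ν r : ℕ)).card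

lemma mem_iff_lt_card_of_downClosed' {S : Finset (Fin n)}
    (h : ∀ j k : Fin n, j ≤ k → k ∈ S → j ∈ S) (j : Fin n) :
    j ∈ S ↔ (j : ℕ) < S.card := by
  constructor
  · intro hj
    have hsub : Finset.Iic j ⊆ S := fun k hk => h k j (Finset.mem_Iic.mp hk) hj
    have := Finset.card_le_card hsub
    rw [Fin.card_Iic] at this; omega
  · intro hj
    by_contra hjS
    have hsub : S ⊆ Finset.Iio j := by
      intro k hk
      rw [Finset.mem_Iio]
      rcases lt_or_ge k j with h' | h'
      · exact h'
      · exact absurd (h j k h' hk) hjS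
    have := Finset.card_le_card hsub
    rw [Fin.card_Iio] at this; omega

lemma tOf_iff (φ : Fin n → Fin m) (hφ : StrictMono φ) (p : ℕ) (j : Fin n) :
    (φ j : ℕ) ≤ p ↔ (j : ℕ) < tOf φ p := by
  have h := mem_iff_lt_card_of_downClosed'
    (S := (Finset.univ : Finset (Fin n)).filter fun j => (φ j : ℕ) ≤ p) ?_ j
  · simpa [tOf] using h
  · intro a b hab hb
    simp only [Finset.mem_filter, Finset.mem_univ, true_and] at hb ⊢
    calc (φ a : ℕ) ≤ (φ b : ℕ) := Fin.le_def.mp (hφ.monotone hab)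
      _ ≤ p := hb

lemma sOf_iff (ν : Fin n → Fin m) (hν : StrictMono ν) (q : ℕ) (r : Fin n) :
    q ≤ (ν r : ℕ) ↔ sOf ν q ≤ (r : ℕ) := by
  classical
  set U := (Finset.univ : Finset (Fin n)).filter fun r => q ≤ (ν r : ℕ) with hU
  set S := (Finset.univ : Finset (Fin n)).filter fun r => ¬ q ≤ (ν r : ℕ) with hS
  have hcards : U.card + S.card = n := by
    rw [hU, hS, Finset.card_filter_add_card_filter_not, Finset.card_univ,
      Fintype.card_fin]
  have hdown : ∀ a b : Fin n, a ≤ b → b ∈ S → a ∈ S := by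
    intro a b hab hb
    simp only [hS, Finset.mem_filter, Finset.mem_univ, true_and, not_le] at hb ⊢
    have : (ν a : ℕ) ≤ (ν b : ℕ) := by
      rcases eq_or_lt_of_le hab with rfl | h'
      · exact le_refl _
      · exact le_of_lt (hν h')
    omega
  have h := mem_iff_lt_card_of_downClosed' hdown r
  have hrS : r ∈ S ↔ ¬ q ≤ (ν r : ℕ) := by simp [hS]
  have hUn : U.card ≤ n := by omega
  have hSc : S.card = n - U.card := by omega
  unfold sOf
  rw [← hU]
  constructor
  · intro hq
    by_contra hcon
    push_neg at hcon
    exact (hrS.mp (h.mpr (by omega))) hq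
  · intro hs
    by_contra hq
    have hr := h.mp (hrS.mpr hq)
    omega

lemma phi_count_eq (φ : Fin n → Fin m) (hφ : StrictMono φ) (ν : Fin n → Fin m)
    (hν : StrictMono ν) (z : Fin n → Fin n) (p q : ℕ) :
    ((Finset.univ : Finset (Fin n)).filter fun j => (φ j : ℕ) ≤ p ∧ q ≤ (ν (z j) : ℕ)).card
      = ((Finset.univ : Finset (Fin n)).filter fun j : Fin n =>
          (j : ℕ) < tOf φ p ∧ sOf ν q ≤ (z j : ℕ)).card := by
  have hcong : ∀ j ∈ (Finset.univ : Finset (Fin n)),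
      ((φ j : ℕ) ≤ p ∧ q ≤ (ν (z j) : ℕ)) ↔
        ((j : ℕ) < tOf φ p ∧ sOf ν q ≤ (z j : ℕ)) := by
    intro j _
    rw [tOf_iff φ hφ p j, sOf_iff ν hν q (z j)]
  rw [Finset.filter_congr hcong]

end Rank
section Rank2
open Finset
variable {n m : ℕ}

lemma tOf_phi (φ : Fin n → Fin m) (hφ : StrictMono φ) (pm : Fin n) :
    tOf φ (φ pm : ℕ) = (pm : ℕ) + 1 := by
  unfold tOf
  have hcong : ∀ j ∈ (Finset.univ : Finset (Fin n)),
      ((φ j : ℕ) ≤ (φ pm : ℕ)) ↔ j ≤ pm := by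
    intro j _
    rw [← Fin.le_def, hφ.le_iff_le]
  rw [Finset.filter_congr hcong]
  have : (Finset.univ.filter fun j : Fin n => j ≤ pm) = Finset.Iic pm := by
    ext j; simp
  rw [this, Fin.card_Iic]

lemma sOf_nu (ν : Fin n → Fin m) (hν : StrictMono ν) (qq : Fin n) :
    sOf ν (ν qq : ℕ) = (qq : ℕ) := by
  unfold sOf
  have hcong : ∀ r ∈ (Finset.univ : Finset (Fin n)),
      ((ν qq : ℕ) ≤ (ν r : ℕ)) ↔ qq ≤ r := by
    intro r _
    rw [← Fin.le_def, hν.le_iff_le]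
  rw [Finset.filter_congr hcong]
  have : (Finset.univ.filter fun r : Fin n => qq ≤ r) = Finset.Ici qq := by
    ext r; simp
  rw [this, Fin.card_Ici]
  omega

/-- rank of an aligned function in terms of its pattern -/
lemma rk_aligned (φ : Fin n → Fin m) (hφ : StrictMono φ) (ν : Fin n → Fin m)
    (hν : StrictMono ν) (b : Fin m → ℕ) (F : Fin m → ℕ) (z : Fin n → Fin n)
    (hin : ∀ j, F (φ j) = (ν (z j) : ℕ)) (hout : ∀ i, (∀ j, φ j ≠ i) → F i = b i)
    (p q : ℕ) :
    rkC F p q = ((Finset.univ : Finset (Fin n)).filter fun j : Fin n =>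
        (j : ℕ) < tOf φ p ∧ sOf ν q ≤ (z j : ℕ)).card
      + ((Finset.univ : Finset (Fin m)).filter fun i =>
          (∀ j, φ j ≠ i) ∧ ((i : ℕ) ≤ p ∧ q ≤ b i)).card := by
  rw [rk_split φ hφ F p q]
  congr 1
  · rw [← phi_count_eq φ hφ ν hν z p q]
    congr 1
    apply Finset.filter_congr
    intro j _
    rw [hin j]
  · congr 1
    apply Finset.filter_congr
    intro i _
    constructor
    · rintro ⟨h1, h2, h3⟩
      exact ⟨h1, h2, by rwa [← hout i h1]⟩
    · rintro ⟨h1, h2, h3⟩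
      exact ⟨h1, h2, by rwa [hout i h1]⟩

/-- comparison transfer between aligned functions and their patterns -/
lemma rankLE_aligned_iff (φ : Fin n → Fin m) (hφ : StrictMono φ) (ν : Fin n → Fin m)
    (hν : StrictMono ν) (b : Fin m → ℕ) (F F' : Fin m → ℕ) (z z' : Fin n → Fin n)
    (hin : ∀ j, F (φ j) = (ν (z j) : ℕ)) (hout : ∀ i, (∀ j, φ j ≠ i) → F i = b i)
    (hin' : ∀ j, F' (φ j) = (ν (z' j) : ℕ)) (hout' : ∀ i, (∀ j, φ j ≠ i) → F' i = b i) :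
    rankLE F F' ↔ rankLE (fun j => (z j : ℕ)) (fun j => (z' j : ℕ)) := by
  constructor
  · intro h p' q'
    rcases Nat.lt_or_ge q' n with hq | hq
    · have hn : 0 < n := by omega
      have hpmlt : min p' (n - 1) < n := by omega
      have hcnt : rkC F (φ ⟨min p' (n - 1), hpmlt⟩ : ℕ) (ν ⟨q', hq⟩ : ℕ) ≤
          rkC F' (φ ⟨min p' (n - 1), hpmlt⟩ : ℕ) (ν ⟨q', hq⟩ : ℕ) := h _ _
      rw [rk_aligned φ hφ ν hν b F z hin hout, rk_aligned φ hφ ν hν b F' z' hin' hout']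
        at hcnt
      have hcnt2 := Nat.add_le_add_iff_right.mp hcnt
      have hcong : ∀ (zz : Fin n → Fin n),
          (Finset.univ.filter fun j : Fin n =>
              (j : ℕ) < tOf φ (φ ⟨min p' (n - 1), hpmlt⟩ : ℕ) ∧
              sOf ν (ν ⟨q', hq⟩ : ℕ) ≤ (zz j : ℕ))
            = (Finset.univ.filter fun j : Fin n => (j : ℕ) ≤ p' ∧ q' ≤ (zz j : ℕ)) := by
        intro zz
        apply Finset.filter_congr
        intro j _
        rw [tOf_phi φ hφ, sOf_nu ν hν]
        have hj := j.isLt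
        constructor
        · rintro ⟨h1, h2⟩
          refine ⟨?_, h2⟩
          simp only at h1
          omega
        · rintro ⟨h1, h2⟩
          refine ⟨?_, h2⟩
          simp only
          omega
      rw [hcong z, hcong z'] at hcnt2
      exact hcnt2
    · -- q' ≥ n : both sides are zero
      have hz : ∀ (zz : Fin n → Fin n),
          (Finset.univ.filter fun i : Fin n => (i : ℕ) ≤ p' ∧ q' ≤ ((zz i : Fin n) : ℕ)).card = 0 := by
        intro zz
        rw [Finset.card_eq_zero, Finset.filter_eq_empty_iff]
        intro i _
        rintro ⟨-, hle⟩
        have := (zz i).isLt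
        omega
      rw [hz z, hz z']
  · intro h p q
    have e1 := rk_aligned φ hφ ν hν b F z hin hout p q
    have e2 := rk_aligned φ hφ ν hν b F' z' hin' hout' p q
    show rkC F p q ≤ rkC F' p q
    rw [e1, e2]
    apply Nat.add_le_add_right
    rcases Nat.eq_zero_or_pos (tOf φ p) with ht | ht
    · simp [ht]
    · have hcnt := h (tOf φ p - 1) (sOf ν q)
      have hcong : ∀ (zz : Fin n → Fin n),
          (Finset.univ.filter fun j : Fin n => (j : ℕ) < tOf φ p ∧ sOf ν q ≤ (zz j : ℕ))
            = (Finset.univ.filter fun j : Fin n => (j : ℕ) ≤ tOf φ p - 1 ∧ sOf ν q ≤ (zz j : ℕ)) := by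
        intro zz
        apply Finset.filter_congr
        intro j _
        constructor
        · rintro ⟨h1, h2⟩; exact ⟨by omega, h2⟩
        · rintro ⟨h1, h2⟩; exact ⟨by omega, h2⟩
      rw [hcong z, hcong z']
      exact hcnt

end Rank2
section Decomp
open Finset
variable {n m : ℕ}

lemma inv_in_part (φ : Fin n → Fin m) (hφ : StrictMono φ) (f : Fin m → ℕ) (g : Fin n → ℕ)
    (hpat : ∀ j k : Fin n, j < k → (f (φ k) < f (φ j) ↔ g k < g j)) :
    (Finset.univ.filter fun p : Fin m × Fin m =>
      ((p.1 < p.2 ∧ f p.2 < f p.1) ∧ (∃ j, φ j = p.1)) ∧ (∃ j, φ j = p.2)).card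
      = invNum g := by
  unfold invNum
  refine (Finset.card_nbij (i := fun jk : Fin n × Fin n => (φ jk.1, φ jk.2)) ?_ ?_ ?_).symm
  · rintro ⟨j, k⟩ hjk
    simp only [Finset.mem_coe, Finset.mem_filter, Finset.mem_univ, true_and] at hjk ⊢
    obtain ⟨hlt, hg⟩ := hjk
    exact ⟨⟨⟨hφ hlt, (hpat j k hlt).mpr hg⟩, ⟨j, rfl⟩⟩, ⟨k, rfl⟩⟩
  · intro a _ b _ h
    simp only [Prod.mk.injEq] at h
    exact Prod.ext (hφ.injective h.1) (hφ.injective h.2)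
  · rintro ⟨a, b⟩ hab
    simp only [Finset.coe_filter, Set.mem_setOf_eq, Finset.mem_univ, true_and] at hab
    obtain ⟨⟨⟨hlt, hf⟩, ⟨j, rfl⟩⟩, ⟨k, rfl⟩⟩ := hab
    have hjk : j < k := hφ.lt_iff_lt.mp hlt
    exact ⟨(j, k), by simp [hjk, (hpat j k hjk).mp hf], rfl⟩

lemma inv_bo_part (φ : Fin n → Fin m) (hφ : StrictMono φ) (f : Fin m → ℕ) :
    (Finset.univ.filter fun p : Fin m × Fin m =>
      ((p.1 < p.2 ∧ f p.2 < f p.1) ∧ (∃ j, φ j = p.1)) ∧ ¬(∃ j, φ j = p.2)).card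
      = (Finset.univ.filter fun i : Fin m => ∀ j, φ j ≠ i).sum
          (fun i₀ => (Finset.univ.filter fun j : Fin n => φ j < i₀ ∧ f i₀ < f (φ j)).card) := by
  classical
  rw [Finset.card_eq_sum_card_fiberwise
    (f := fun p : Fin m × Fin m => p.2)
    (t := Finset.univ.filter fun i : Fin m => ∀ j, φ j ≠ i) ?_]
  · apply Finset.sum_congr rfl
    intro i₀ hi₀
    simp only [Finset.mem_filter, Finset.mem_univ, true_and] at hi₀
    rw [Finset.filter_filter]
    refine (Finset.card_nbij (i := fun j : Fin n => (φ j, i₀)) ?_ ?_ ?_).symm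
    · intro j hj
      simp only [Finset.mem_coe, Finset.mem_filter, Finset.mem_univ, true_and] at hj
      refine Finset.mem_filter.mpr ⟨Finset.mem_univ _, ⟨⟨⟨hj.1, hj.2⟩, ⟨j, rfl⟩⟩, ?_⟩, rfl⟩
      rintro ⟨k, hk⟩
      exact hi₀ k hk
    · intro a _ b _ h
      simp only [Prod.mk.injEq] at h
      exact hφ.injective h.1
    · rintro ⟨a, b⟩ hab
      simp only [Finset.mem_coe, Finset.mem_filter, Finset.mem_univ, true_and] at hab
      obtain ⟨⟨⟨⟨hlt, hf⟩, ⟨j, rfl⟩⟩, -⟩, rfl⟩ := hab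
      exact ⟨j, by simp [hlt, hf], rfl⟩
  · intro p hp
    simp only [Finset.mem_coe, Finset.mem_filter, Finset.mem_univ, true_and, not_exists] at hp ⊢
    exact hp.2

lemma inv_ob_part (φ : Fin n → Fin m) (hφ : StrictMono φ) (f : Fin m → ℕ) :
    (Finset.univ.filter fun p : Fin m × Fin m =>
      ((p.1 < p.2 ∧ f p.2 < f p.1) ∧ ¬(∃ j, φ j = p.1)) ∧ (∃ j, φ j = p.2)).card
      = (Finset.univ.filter fun i : Fin m => ∀ j, φ j ≠ i).sum
          (fun i₀ => (Finset.univ.filter fun j : Fin n => i₀ < φ j ∧ f (φ j) < f i₀).card) := by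
  classical
  rw [Finset.card_eq_sum_card_fiberwise
    (f := fun p : Fin m × Fin m => p.1)
    (t := Finset.univ.filter fun i : Fin m => ∀ j, φ j ≠ i) ?_]
  · apply Finset.sum_congr rfl
    intro i₀ hi₀
    simp only [Finset.mem_filter, Finset.mem_univ, true_and] at hi₀
    rw [Finset.filter_filter]
    refine (Finset.card_nbij (i := fun j : Fin n => (i₀, φ j)) ?_ ?_ ?_).symm
    · intro j hj
      simp only [Finset.mem_coe, Finset.mem_filter, Finset.mem_univ, true_and] at hj
      refine Finset.mem_filter.mpr ⟨Finset.mem_univ _, ⟨⟨⟨hj.1, hj.2⟩, ?_⟩, ⟨j, rfl⟩⟩, rfl⟩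
      rintro ⟨k, hk⟩
      exact hi₀ k hk
    · intro a _ b _ h
      simp only [Prod.mk.injEq] at h
      exact hφ.injective h.2
    · rintro ⟨a, b⟩ hab
      simp only [Finset.mem_coe, Finset.mem_filter, Finset.mem_univ, true_and] at hab
      obtain ⟨⟨⟨⟨hlt, hf⟩, -⟩, ⟨j, rfl⟩⟩, rfl⟩ := hab
      exact ⟨j, by simp [hlt, hf], rfl⟩
  · intro p hp
    simp only [Finset.mem_coe, Finset.mem_filter, Finset.mem_univ, true_and, not_exists] at hp ⊢
    exact hp.1.2

/-- decomposition of the inversion number of a function aligned along an embedding -/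
lemma invNum_decomp (φ : Fin n → Fin m) (hφ : StrictMono φ) (f : Fin m → ℕ) (g : Fin n → ℕ)
    (hpat : ∀ j k : Fin n, j < k → (f (φ k) < f (φ j) ↔ g k < g j)) :
    invNum f = invNum g
      + ((Finset.univ.filter fun i : Fin m => ∀ j, φ j ≠ i).sum fun i₀ =>
          ((Finset.univ.filter fun j : Fin n => φ j < i₀ ∧ f i₀ < f (φ j)).card
            + (Finset.univ.filter fun j : Fin n => i₀ < φ j ∧ f (φ j) < f i₀).card))
      + (Finset.univ.filter fun p : Fin m × Fin m =>
          ((p.1 < p.2 ∧ f p.2 < f p.1) ∧ ¬(∃ j, φ j = p.1)) ∧ ¬(∃ j, φ j = p.2)).card := by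
  classical
  have step1 := filterSplit' (Finset.univ : Finset (Fin m × Fin m))
    (fun p => p.1 < p.2 ∧ f p.2 < f p.1) (fun p => ∃ j, φ j = p.1)
  have step2 := filterSplit' (Finset.univ : Finset (Fin m × Fin m))
    (fun p => (p.1 < p.2 ∧ f p.2 < f p.1) ∧ (∃ j, φ j = p.1)) (fun p => ∃ j, φ j = p.2)
  have step3 := filterSplit' (Finset.univ : Finset (Fin m × Fin m))
    (fun p => (p.1 < p.2 ∧ f p.2 < f p.1) ∧ ¬(∃ j, φ j = p.1)) (fun p => ∃ j, φ j = p.2)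
  have : invNum f = (Finset.univ.filter fun p : Fin m × Fin m =>
      p.1 < p.2 ∧ f p.2 < f p.1).card := rfl
  rw [this, step1, step2, step3, inv_in_part φ hφ f g hpat, inv_bo_part φ hφ f,
    inv_ob_part φ hφ f, Finset.sum_add_distrib]
  ring
end Decomp
section LL
open Finset
variable {n m : ℕ}

lemma card_filter_perm (e : Equiv.Perm (Fin n)) (π : Fin n → Prop) [DecidablePred π] :
    (Finset.univ.filter fun j : Fin n => π (e j)).card
      = (Finset.univ.filter fun r : Fin n => π r).card := by
  refine Finset.card_nbij (i := fun j => e j) ?_ ?_ ?_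
  · intro j hj
    simp only [Finset.mem_coe, Finset.mem_filter, Finset.mem_univ, true_and] at hj ⊢
    exact hj
  · intro a _ b _ h
    exact e.injective h
  · intro r hr
    simp only [Finset.mem_coe, Finset.mem_filter, Finset.mem_univ, true_and] at hr
    exact ⟨e.symm r, by simp [hr], by simp⟩

lemma LMKS (φ : Fin n → Fin m) (f : Fin m → ℕ) (hinj : Function.Injective f)
    (i₀ : Fin m) (hi₀ : ∀ j, φ j ≠ i₀) :
    (Finset.univ.filter fun j : Fin n => φ j < i₀ ∧ f i₀ < f (φ j)).card
      + (Finset.univ.filter fun j : Fin n => f (φ j) < f i₀).card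
    = (Finset.univ.filter fun j : Fin n => i₀ < φ j ∧ f (φ j) < f i₀).card
      + (Finset.univ.filter fun j : Fin n => φ j < i₀).card := by
  classical
  have hne : ∀ j : Fin n, f (φ j) ≠ f i₀ := fun j h => hi₀ j (hinj h)
  have hS := filterSplit' (Finset.univ : Finset (Fin n))
    (fun j => φ j < i₀) (fun j => f i₀ < f (φ j))
  have hK := filterSplit' (Finset.univ : Finset (Fin n))
    (fun j => f (φ j) < f i₀) (fun j => φ j < i₀)
  have e1 : (Finset.univ.filter fun j : Fin n => (φ j < i₀) ∧ ¬ f i₀ < f (φ j))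
      = (Finset.univ.filter fun j : Fin n => (f (φ j) < f i₀) ∧ φ j < i₀) := by
    apply Finset.filter_congr
    intro j _
    constructor
    · rintro ⟨h1, h2⟩
      exact ⟨lt_of_le_of_ne (not_lt.mp h2) (hne j), h1⟩
    · rintro ⟨h1, h2⟩
      exact ⟨h2, not_lt.mpr h1.le⟩
  have e2 : (Finset.univ.filter fun j : Fin n => (f (φ j) < f i₀) ∧ ¬ φ j < i₀)
      = (Finset.univ.filter fun j : Fin n => i₀ < φ j ∧ f (φ j) < f i₀) := by
    apply Finset.filter_congr
    intro j _
    constructor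
    · rintro ⟨h1, h2⟩
      exact ⟨lt_of_le_of_ne (not_lt.mp h2) (fun h => hi₀ j h.symm), h1⟩
    · rintro ⟨h1, h2⟩
      exact ⟨h2, not_lt.mpr h1.le⟩
  rw [e1] at hS
  rw [e2] at hK
  omega

/-- from the length condition: the mixed inversion counts agree pointwise -/
lemma L_pointwise (φ : Fin n → Fin m) (hφ : StrictMono φ) (F G : Fin m → ℕ)
    (X Y : Fin n → ℕ)
    (hFinj : Function.Injective F) (hGinj : Function.Injective G)
    (hout : ∀ i, (∀ j, φ j ≠ i) → F i = G i)
    (hFG : rankLE F G)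
    (hlen : invNum G + invNum X = invNum F + invNum Y)
    (hpatF : ∀ j k : Fin n, j < k → (F (φ k) < F (φ j) ↔ X k < X j))
    (hpatG : ∀ j k : Fin n, j < k → (G (φ k) < G (φ j) ↔ Y k < Y j))
    (hK : ∀ i₀ : Fin m, (∀ j, φ j ≠ i₀) →
      (Finset.univ.filter fun j : Fin n => G (φ j) < G i₀).card
        = (Finset.univ.filter fun j : Fin n => F (φ j) < F i₀).card) :
    ∀ i₀ : Fin m, (∀ j, φ j ≠ i₀) →
      (Finset.univ.filter fun j : Fin n => φ j < i₀ ∧ F i₀ < F (φ j)).card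
        = (Finset.univ.filter fun j : Fin n => φ j < i₀ ∧ G i₀ < G (φ j)).card := by
  classical
  have decompF := invNum_decomp φ hφ F X hpatF
  have decompG := invNum_decomp φ hφ G Y hpatG
  have hOO : (Finset.univ.filter fun p : Fin m × Fin m =>
      ((p.1 < p.2 ∧ F p.2 < F p.1) ∧ ¬(∃ j, φ j = p.1)) ∧ ¬(∃ j, φ j = p.2)).card
      = (Finset.univ.filter fun p : Fin m × Fin m =>
      ((p.1 < p.2 ∧ G p.2 < G p.1) ∧ ¬(∃ j, φ j = p.1)) ∧ ¬(∃ j, φ j = p.2)).card := by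
    congr 1
    apply Finset.filter_congr
    intro p _
    constructor
    · rintro ⟨⟨⟨h1, h2⟩, h3⟩, h4⟩
      refine ⟨⟨⟨h1, ?_⟩, h3⟩, h4⟩
      rwa [← hout p.1 (fun j hj => h3 ⟨j, hj⟩), ← hout p.2 (fun j hj => h4 ⟨j, hj⟩)]
    · rintro ⟨⟨⟨h1, h2⟩, h3⟩, h4⟩
      refine ⟨⟨⟨h1, ?_⟩, h3⟩, h4⟩
      rwa [hout p.1 (fun j hj => h3 ⟨j, hj⟩), hout p.2 (fun j hj => h4 ⟨j, hj⟩)]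
  have hsum : ((Finset.univ.filter fun i : Fin m => ∀ j, φ j ≠ i).sum fun i₀ =>
          ((Finset.univ.filter fun j : Fin n => φ j < i₀ ∧ F i₀ < F (φ j)).card
            + (Finset.univ.filter fun j : Fin n => i₀ < φ j ∧ F (φ j) < F i₀).card))
      = ((Finset.univ.filter fun i : Fin m => ∀ j, φ j ≠ i).sum fun i₀ =>
          ((Finset.univ.filter fun j : Fin n => φ j < i₀ ∧ G i₀ < G (φ j)).card
            + (Finset.univ.filter fun j : Fin n => i₀ < φ j ∧ G (φ j) < G i₀).card)) := by
    omega
  -- pointwise inequality L_F ≤ L_G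
  have hLle : ∀ i₀ ∈ (Finset.univ.filter fun i : Fin m => ∀ j, φ j ≠ i),
      (Finset.univ.filter fun j : Fin n => φ j < i₀ ∧ F i₀ < F (φ j)).card
        ≤ (Finset.univ.filter fun j : Fin n => φ j < i₀ ∧ G i₀ < G (φ j)).card := by
    intro i₀ hmem
    simp only [Finset.mem_filter, Finset.mem_univ, true_and] at hmem
    by_cases h0 : (i₀ : ℕ) = 0
    · have hempty : ∀ (H : Fin m → ℕ),
          (Finset.univ.filter fun j : Fin n => φ j < i₀ ∧ H i₀ < H (φ j)) = ∅ := by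
        intro H
        rw [Finset.filter_eq_empty_iff]
        rintro j - ⟨hlt, -⟩
        rw [Fin.lt_def] at hlt
        omega
      rw [hempty F, hempty G]
    · have hr : rkC F ((i₀ : ℕ) - 1) (F i₀ + 1) ≤ rkC G ((i₀ : ℕ) - 1) (F i₀ + 1) :=
        hFG _ _
      rw [rk_split φ hφ F, rk_split φ hφ G] at hr
      have houtpart : (Finset.univ.filter fun i : Fin m =>
          (∀ j, φ j ≠ i) ∧ ((i : ℕ) ≤ (i₀ : ℕ) - 1 ∧ F i₀ + 1 ≤ F i)).card
          = (Finset.univ.filter fun i : Fin m =>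
          (∀ j, φ j ≠ i) ∧ ((i : ℕ) ≤ (i₀ : ℕ) - 1 ∧ F i₀ + 1 ≤ G i)).card := by
        congr 1
        apply Finset.filter_congr
        intro i _
        constructor
        · rintro ⟨h1, h2, h3⟩
          exact ⟨h1, h2, by rwa [← hout i h1]⟩
        · rintro ⟨h1, h2, h3⟩
          exact ⟨h1, h2, by rwa [hout i h1]⟩
      have hval : ∀ j : Fin n, (φ j : ℕ) ≠ (i₀ : ℕ) := by
        intro j h
        exact hmem j (Fin.ext h)
      have eF : (Finset.univ.filter fun j : Fin n =>
          (φ j : ℕ) ≤ (i₀ : ℕ) - 1 ∧ F i₀ + 1 ≤ F (φ j))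
          = (Finset.univ.filter fun j : Fin n => φ j < i₀ ∧ F i₀ < F (φ j)) := by
        apply Finset.filter_congr
        intro j _
        rw [Fin.lt_def]
        constructor
        · rintro ⟨h1, h2⟩
          exact ⟨by omega, by omega⟩
        · rintro ⟨h1, h2⟩
          have := hval j
          exact ⟨by omega, by omega⟩
      have eG : (Finset.univ.filter fun j : Fin n =>
          (φ j : ℕ) ≤ (i₀ : ℕ) - 1 ∧ F i₀ + 1 ≤ G (φ j))
          = (Finset.univ.filter fun j : Fin n => φ j < i₀ ∧ G i₀ < G (φ j)) := by
        apply Finset.filter_congr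
        intro j _
        rw [Fin.lt_def]
        have hFG0 : F i₀ = G i₀ := hout i₀ hmem
        constructor
        · rintro ⟨h1, h2⟩
          exact ⟨by omega, by omega⟩
        · rintro ⟨h1, h2⟩
          have := hval j
          exact ⟨by omega, by omega⟩
      rw [eF, eG] at hr
      omega
  -- LMKS identities
  have hksF := fun (i₀ : Fin m) (h : ∀ j, φ j ≠ i₀) => LMKS φ F hFinj i₀ h
  have hksG := fun (i₀ : Fin m) (h : ∀ j, φ j ≠ i₀) => LMKS φ G hGinj i₀ h
  have eSum : ∀ (H : Fin m → ℕ), (∀ i₀ : Fin m, (∀ j, φ j ≠ i₀) →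
        (Finset.univ.filter fun j : Fin n => φ j < i₀ ∧ H i₀ < H (φ j)).card
          + (Finset.univ.filter fun j : Fin n => H (φ j) < H i₀).card
        = (Finset.univ.filter fun j : Fin n => i₀ < φ j ∧ H (φ j) < H i₀).card
          + (Finset.univ.filter fun j : Fin n => φ j < i₀).card) →
      ((Finset.univ.filter fun i : Fin m => ∀ j, φ j ≠ i).sum fun i₀ =>
          ((Finset.univ.filter fun j : Fin n => φ j < i₀ ∧ H i₀ < H (φ j)).card
            + (Finset.univ.filter fun j : Fin n => i₀ < φ j ∧ H (φ j) < H i₀).card))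
        + ((Finset.univ.filter fun i : Fin m => ∀ j, φ j ≠ i).sum fun i₀ =>
          (Finset.univ.filter fun j : Fin n => φ j < i₀).card)
      = 2 * ((Finset.univ.filter fun i : Fin m => ∀ j, φ j ≠ i).sum fun i₀ =>
          (Finset.univ.filter fun j : Fin n => φ j < i₀ ∧ H i₀ < H (φ j)).card)
        + ((Finset.univ.filter fun i : Fin m => ∀ j, φ j ≠ i).sum fun i₀ =>
          (Finset.univ.filter fun j : Fin n => H (φ j) < H i₀).card) := by
    intro H hks
    rw [← Finset.sum_add_distrib, Finset.mul_sum, ← Finset.sum_add_distrib]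
    apply Finset.sum_congr rfl
    intro i₀ hmem
    simp only [Finset.mem_filter, Finset.mem_univ, true_and] at hmem
    have := hks i₀ hmem
    omega
  have eF := eSum F hksF
  have eG := eSum G hksG
  have hKsum : ((Finset.univ.filter fun i : Fin m => ∀ j, φ j ≠ i).sum fun i₀ =>
        (Finset.univ.filter fun j : Fin n => G (φ j) < G i₀).card)
      = ((Finset.univ.filter fun i : Fin m => ∀ j, φ j ≠ i).sum fun i₀ =>
        (Finset.univ.filter fun j : Fin n => F (φ j) < F i₀).card) := by
    apply Finset.sum_congr rfl
    intro i₀ hmem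
    simp only [Finset.mem_filter, Finset.mem_univ, true_and] at hmem
    exact hK i₀ hmem
  have hLsum : ((Finset.univ.filter fun i : Fin m => ∀ j, φ j ≠ i).sum fun i₀ =>
        (Finset.univ.filter fun j : Fin n => φ j < i₀ ∧ F i₀ < F (φ j)).card)
      = ((Finset.univ.filter fun i : Fin m => ∀ j, φ j ≠ i).sum fun i₀ =>
        (Finset.univ.filter fun j : Fin n => φ j < i₀ ∧ G i₀ < G (φ j)).card) := by
    omega
  have hpt := (Finset.sum_eq_sum_iff_of_le hLle).mp hLsum
  intro i₀ hi₀
  exact hpt i₀ (by simp [hi₀])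
end LL
section Squeeze
open Finset
variable {n m : ℕ}

lemma squeeze_out (φ : Fin n → Fin m) (hφ : StrictMono φ)
    (v w u : Equiv.Perm (Fin m))
    (hout : ∀ i, (∀ j, φ j ≠ i) → v i = w i)
    (hvu : rankLE (fun i => (v i : ℕ)) (fun i => (u i : ℕ)))
    (huw : rankLE (fun i => (u i : ℕ)) (fun i => (w i : ℕ)))
    (hL : ∀ i₁ : Fin m, (∀ j, φ j ≠ i₁) →
      (Finset.univ.filter fun j : Fin n => φ j < i₁ ∧ (v i₁ : ℕ) < (v (φ j) : ℕ)).card =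
      (Finset.univ.filter fun j : Fin n => φ j < i₁ ∧ (w i₁ : ℕ) < (w (φ j) : ℕ)).card)
    (i₀ : Fin m) (hi₀ : ∀ j, φ j ≠ i₀) : u i₀ = v i₀ := by
  classical
  have hc' : (w i₀ : ℕ) = (v i₀ : ℕ) := by rw [← hout i₀ hi₀]
  have hvalne : ∀ j : Fin n, (φ j : ℕ) ≠ (i₀ : ℕ) := fun j h => hi₀ j (Fin.ext h)
  have key : ∀ p q : ℕ, (∀ k : ℕ, k ≠ (i₀ : ℕ) → (k ≤ p ↔ k < (i₀ : ℕ))) →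
      (q = (v i₀ : ℕ) ∨ q = (v i₀ : ℕ) + 1) →
      rkC (fun i => (v i : ℕ)) p q = rkC (fun i => (w i : ℕ)) p q := by
    intro p q hp hq
    rw [rk_split φ hφ _ p q, rk_split φ hφ _ p q]
    congr 1
    · have eV : (Finset.univ.filter fun j : Fin n => (φ j : ℕ) ≤ p ∧ q ≤ (v (φ j) : ℕ))
          = (Finset.univ.filter fun j : Fin n => φ j < i₀ ∧ (v i₀ : ℕ) < (v (φ j) : ℕ)) := by
        apply Finset.filter_congr
        intro j _
        have h1 := hp (φ j : ℕ) (hvalne j)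
        have h2 : (v (φ j) : ℕ) ≠ (v i₀ : ℕ) :=
          fun hh => hi₀ j (v.injective (Fin.val_injective hh))
        rw [Fin.lt_def]
        constructor
        · rintro ⟨ha, hb⟩
          exact ⟨by omega, by omega⟩
        · rintro ⟨ha, hb⟩
          exact ⟨by omega, by omega⟩
      have eW : (Finset.univ.filter fun j : Fin n => (φ j : ℕ) ≤ p ∧ q ≤ (w (φ j) : ℕ))
          = (Finset.univ.filter fun j : Fin n => φ j < i₀ ∧ (w i₀ : ℕ) < (w (φ j) : ℕ)) := by
        apply Finset.filter_congr
        intro j _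
        have h1 := hp (φ j : ℕ) (hvalne j)
        have h2 : (w (φ j) : ℕ) ≠ (w i₀ : ℕ) :=
          fun hh => hi₀ j (w.injective (Fin.val_injective hh))
        rw [Fin.lt_def]
        constructor
        · rintro ⟨ha, hb⟩
          exact ⟨by omega, by omega⟩
        · rintro ⟨ha, hb⟩
          exact ⟨by omega, by omega⟩
      rw [eV, eW]
      exact hL i₀ hi₀
    · congr 1
      apply Finset.filter_congr
      intro i _
      constructor
      · rintro ⟨h1, h2, h3⟩
        exact ⟨h1, h2, by rwa [← hout i h1]⟩
      · rintro ⟨h1, h2, h3⟩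
        exact ⟨h1, h2, by rwa [hout i h1]⟩
  have hpfull : ∀ k : ℕ, k ≠ (i₀ : ℕ) → (k ≤ (i₀ : ℕ) ↔ k < (i₀ : ℕ)) := by
    intro k hk; omega
  have squeeze : ∀ p q : ℕ, (∀ k : ℕ, k ≠ (i₀ : ℕ) → (k ≤ p ↔ k < (i₀ : ℕ))) →
      (q = (v i₀ : ℕ) ∨ q = (v i₀ : ℕ) + 1) →
      rkC (fun i => (u i : ℕ)) p q = rkC (fun i => (v i : ℕ)) p q := by
    intro p q hp hq
    have h1 : rkC (fun i => (v i : ℕ)) p q ≤ rkC (fun i => (u i : ℕ)) p q := hvu _ _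
    have h2 : rkC (fun i => (u i : ℕ)) p q ≤ rkC (fun i => (w i : ℕ)) p q := huw _ _
    have h3 := key p q hp hq
    omega
  have hU1 := squeeze (i₀ : ℕ) (v i₀ : ℕ) hpfull (Or.inl rfl)
  have hU2 := squeeze (i₀ : ℕ) ((v i₀ : ℕ) + 1) hpfull (Or.inr rfl)
  -- the +1 identity for v at p = i₀
  have h3 : rkC (fun i => (v i : ℕ)) (i₀ : ℕ) (v i₀ : ℕ)
      = rkC (fun i => (v i : ℕ)) (i₀ : ℕ) ((v i₀ : ℕ) + 1) + 1 := by
    show (Finset.univ.filter fun i : Fin m => (i : ℕ) ≤ (i₀ : ℕ) ∧ (v i₀ : ℕ) ≤ (v i : ℕ)).card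
      = (Finset.univ.filter fun i : Fin m =>
          (i : ℕ) ≤ (i₀ : ℕ) ∧ (v i₀ : ℕ) + 1 ≤ (v i : ℕ)).card + 1
    have hins : (Finset.univ.filter fun i : Fin m =>
        (i : ℕ) ≤ (i₀ : ℕ) ∧ (v i₀ : ℕ) ≤ (v i : ℕ))
        = insert i₀ (Finset.univ.filter fun i : Fin m =>
            (i : ℕ) ≤ (i₀ : ℕ) ∧ (v i₀ : ℕ) + 1 ≤ (v i : ℕ)) := by
      ext i
      simp only [Finset.mem_filter, Finset.mem_insert, Finset.mem_univ, true_and]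
      constructor
      · rintro ⟨h1, h2⟩
        by_cases hii : i = i₀
        · exact Or.inl hii
        · refine Or.inr ⟨h1, ?_⟩
          have : (v i : ℕ) ≠ (v i₀ : ℕ) :=
            fun hh => hii (v.injective (Fin.val_injective hh))
          omega
      · rintro (rfl | ⟨h1, h2⟩)
        · exact ⟨le_refl _, le_refl _⟩
        · exact ⟨h1, by omega⟩
    rw [hins, Finset.card_insert_of_notMem
      (by simp only [Finset.mem_filter, Finset.mem_univ, true_and]; omega)]
  -- extraction
  have hBA : (Finset.univ.filter fun i : Fin m =>
      (i : ℕ) ≤ (i₀ : ℕ) ∧ (v i₀ : ℕ) + 1 ≤ (u i : ℕ))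
      ⊆ (Finset.univ.filter fun i : Fin m =>
      (i : ℕ) ≤ (i₀ : ℕ) ∧ (v i₀ : ℕ) ≤ (u i : ℕ)) := by
    intro i hi
    simp only [Finset.mem_filter, Finset.mem_univ, true_and] at hi ⊢
    omega
  have hcards : (Finset.univ.filter fun i : Fin m =>
      (i : ℕ) ≤ (i₀ : ℕ) ∧ (v i₀ : ℕ) ≤ (u i : ℕ)).card
      = (Finset.univ.filter fun i : Fin m =>
      (i : ℕ) ≤ (i₀ : ℕ) ∧ (v i₀ : ℕ) + 1 ≤ (u i : ℕ)).card + 1 := by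
    have e1 : (Finset.univ.filter fun i : Fin m =>
        (i : ℕ) ≤ (i₀ : ℕ) ∧ (v i₀ : ℕ) ≤ (u i : ℕ)).card
        = rkC (fun i => (u i : ℕ)) (i₀ : ℕ) (v i₀ : ℕ) := rfl
    have e2 : (Finset.univ.filter fun i : Fin m =>
        (i : ℕ) ≤ (i₀ : ℕ) ∧ (v i₀ : ℕ) + 1 ≤ (u i : ℕ)).card
        = rkC (fun i => (u i : ℕ)) (i₀ : ℕ) ((v i₀ : ℕ) + 1) := rfl
    omega
  have hne : ((Finset.univ.filter fun i : Fin m =>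
      (i : ℕ) ≤ (i₀ : ℕ) ∧ (v i₀ : ℕ) ≤ (u i : ℕ)) \
      (Finset.univ.filter fun i : Fin m =>
      (i : ℕ) ≤ (i₀ : ℕ) ∧ (v i₀ : ℕ) + 1 ≤ (u i : ℕ))).Nonempty := by
    rw [← Finset.card_pos, Finset.card_sdiff_of_subset hBA]
    omega
  obtain ⟨istar, hist⟩ := hne
  rw [Finset.mem_sdiff, Finset.mem_filter] at hist
  obtain ⟨⟨-, hile, hcle⟩, hnB⟩ := hist
  rw [Finset.mem_filter] at hnB
  simp only [Finset.mem_univ, true_and, not_and, not_le] at hnB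
  have hueq : (u istar : ℕ) = (v i₀ : ℕ) := by
    have := hnB hile
    omega
  by_cases hlt : (istar : ℕ) < (i₀ : ℕ)
  · exfalso
    have hp' : ∀ k : ℕ, k ≠ (i₀ : ℕ) → (k ≤ (i₀ : ℕ) - 1 ↔ k < (i₀ : ℕ)) := by
      intro k hk; omega
    have hU1' := squeeze ((i₀ : ℕ) - 1) (v i₀ : ℕ) hp' (Or.inl rfl)
    have hU2' := squeeze ((i₀ : ℕ) - 1) ((v i₀ : ℕ) + 1) hp' (Or.inr rfl)
    have h3' : rkC (fun i => (v i : ℕ)) ((i₀ : ℕ) - 1) (v i₀ : ℕ)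
        = rkC (fun i => (v i : ℕ)) ((i₀ : ℕ) - 1) ((v i₀ : ℕ) + 1) := by
      show (Finset.univ.filter fun i : Fin m =>
          (i : ℕ) ≤ (i₀ : ℕ) - 1 ∧ (v i₀ : ℕ) ≤ (v i : ℕ)).card
        = (Finset.univ.filter fun i : Fin m =>
          (i : ℕ) ≤ (i₀ : ℕ) - 1 ∧ (v i₀ : ℕ) + 1 ≤ (v i : ℕ)).card
      congr 1
      apply Finset.filter_congr
      intro i _
      constructor
      · rintro ⟨h1, h2⟩
        have hine : i ≠ i₀ := by
          intro h
          subst h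
          omega
        have : (v i : ℕ) ≠ (v i₀ : ℕ) :=
          fun hh => hine (v.injective (Fin.val_injective hh))
        exact ⟨h1, by omega⟩
      · rintro ⟨h1, h2⟩
        exact ⟨h1, by omega⟩
    have hcards' : (Finset.univ.filter fun i : Fin m =>
        (i : ℕ) ≤ (i₀ : ℕ) - 1 ∧ (v i₀ : ℕ) ≤ (u i : ℕ)).card
        = (Finset.univ.filter fun i : Fin m =>
        (i : ℕ) ≤ (i₀ : ℕ) - 1 ∧ (v i₀ : ℕ) + 1 ≤ (u i : ℕ)).card := by
      have e1 : (Finset.univ.filter fun i : Fin m =>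
          (i : ℕ) ≤ (i₀ : ℕ) - 1 ∧ (v i₀ : ℕ) ≤ (u i : ℕ)).card
          = rkC (fun i => (u i : ℕ)) ((i₀ : ℕ) - 1) (v i₀ : ℕ) := rfl
      have e2 : (Finset.univ.filter fun i : Fin m =>
          (i : ℕ) ≤ (i₀ : ℕ) - 1 ∧ (v i₀ : ℕ) + 1 ≤ (u i : ℕ)).card
          = rkC (fun i => (u i : ℕ)) ((i₀ : ℕ) - 1) ((v i₀ : ℕ) + 1) := rfl
      omega
    have hBA' : (Finset.univ.filter fun i : Fin m =>
        (i : ℕ) ≤ (i₀ : ℕ) - 1 ∧ (v i₀ : ℕ) + 1 ≤ (u i : ℕ))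
        ⊆ (Finset.univ.filter fun i : Fin m =>
        (i : ℕ) ≤ (i₀ : ℕ) - 1 ∧ (v i₀ : ℕ) ≤ (u i : ℕ)) := by
      intro i hi
      simp only [Finset.mem_filter, Finset.mem_univ, true_and] at hi ⊢
      omega
    have heq := Finset.eq_of_subset_of_card_le hBA' (le_of_eq hcards')
    have histar : istar ∈ (Finset.univ.filter fun i : Fin m =>
        (i : ℕ) ≤ (i₀ : ℕ) - 1 ∧ (v i₀ : ℕ) ≤ (u i : ℕ)) := by
      simp only [Finset.mem_filter, Finset.mem_univ, true_and]
      omega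
    rw [← heq] at histar
    simp only [Finset.mem_filter, Finset.mem_univ, true_and] at histar
    omega
  · have hival : (istar : ℕ) = (i₀ : ℕ) := by omega
    have : istar = i₀ := Fin.ext hival
    subst this
    exact Fin.val_injective hueq
end Squeeze

/-- Lemma 2.1 of Woo–Yong: if `Φ` is a common pattern embedding of `x ≤ y` into
`v ≤ w`, with `v` and `w` agreeing outside `Φ`, and `ℓ(w) - ℓ(v) = ℓ(y) - ℓ(x)`, then the
Bruhat intervals `[x, y]` and `[v, w]` are isomorphic as posets. -/
theorem interval_isomorphic_of_length_difference (n m : ℕ)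
    (x y : Equiv.Perm (Fin n)) (v w : Equiv.Perm (Fin m))
    (hxy : bruhatLE x y) (hvw : bruhatLE v w)
    (φ : Fin n → Fin m) (hφ : StrictMono φ)
    (hxv : ∀ j k : Fin n, j < k → ((v (φ j) : ℕ) < v (φ k) ↔ (x j : ℕ) < x k))
    (hyw : ∀ j k : Fin n, j < k → ((w (φ j) : ℕ) < w (φ k) ↔ (y j : ℕ) < y k))
    (hout : ∀ i : Fin m, (∀ j, φ j ≠ i) → v i = w i)
    (hlen : invNum (fun i => (w i : ℕ)) + invNum (fun i => (x i : ℕ)) =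
        invNum (fun i => (v i : ℕ)) + invNum (fun i => (y i : ℕ))) :
    ∃ f : {z : Equiv.Perm (Fin n) // bruhatLE x z ∧ bruhatLE z y} ≃
        {z : Equiv.Perm (Fin m) // bruhatLE v z ∧ bruhatLE z w},
      ∀ a b, bruhatLE a.1 b.1 ↔ bruhatLE (f a).1 (f b).1 := by
  classical
  -- monotone enumeration of the common value set
  have hmono_gen : ∀ (V : Equiv.Perm (Fin m)) (X : Equiv.Perm (Fin n)),
      (∀ j k : Fin n, j < k → ((V (φ j) : ℕ) < V (φ k) ↔ (X j : ℕ) < X k)) →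
      StrictMono (fun r : Fin n => V (φ (X.symm r))) := by
    intro V X hXV r r' hrr
    have hval : (r : ℕ) < (r' : ℕ) := Fin.lt_def.mp hrr
    rcases lt_trichotomy (X.symm r) (X.symm r') with h | h | h
    · refine Fin.lt_def.mpr ?_
      exact (hXV _ _ h).mpr (by simpa using hval)
    · exfalso
      have : r = r' := by
        have := congrArg X h
        simpa using this
      omega
    · have h1 := hXV _ _ h
      simp only [Equiv.apply_symm_apply] at h1
      have h2 : ¬ ((V (φ (X.symm r')) : ℕ) < (V (φ (X.symm r)) : ℕ)) := by
        rw [h1]; omega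
      have h3 : (V (φ (X.symm r')) : ℕ) ≠ (V (φ (X.symm r)) : ℕ) := by
        intro hh
        have : X.symm r' = X.symm r := hφ.injective (V.injective (Fin.val_injective hh))
        have : r' = r := by simpa using congrArg X this
        omega
      have h4 : (V (φ (X.symm r)) : ℕ) < (V (φ (X.symm r')) : ℕ) := by omega
      exact Fin.lt_def.mpr h4
  set ν : Fin n → Fin m := fun r => v (φ (x.symm r)) with hν
  have hνmono : StrictMono ν := hmono_gen v x hxv
  have hν'mono : StrictMono (fun r : Fin n => w (φ (y.symm r))) := hmono_gen w y hyw
  have hνx : ∀ j, v (φ j) = ν (x j) := by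
    intro j
    rw [hν]
    simp
  -- the common value sets of v and w on the pattern positions
  have hVW : ∀ a : Fin m, (∃ j, v (φ j) = a) ↔ (∃ j, w (φ j) = a) := by
    have dir : ∀ (V W : Equiv.Perm (Fin m)), (∀ i, (∀ j, φ j ≠ i) → V i = W i) →
        ∀ a : Fin m, (∃ j, V (φ j) = a) → (∃ j, W (φ j) = a) := by
      rintro V W hVWout a ⟨j, hj⟩
      by_contra hcon
      push_neg at hcon
      have hnφ : ∀ k, φ k ≠ W.symm a := by
        intro k hk
        exact hcon k (by rw [hk]; simp)
      have h2 := hVWout (W.symm a) hnφ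
      have hVa : V (W.symm a) = a := by rw [h2]; simp
      have h3 : W.symm a = φ j := V.injective (by rw [hVa, hj])
      exact hnφ j h3.symm
    intro a
    exact ⟨dir v w hout a, dir w v (fun i hi => (hout i hi).symm) a⟩
  have himg : Finset.image (fun r : Fin n => v (φ (x.symm r))) Finset.univ
      = Finset.image (fun r : Fin n => w (φ (y.symm r))) Finset.univ := by
    ext a
    simp only [Finset.mem_image, Finset.mem_univ, true_and]
    constructor
    · rintro ⟨r, hr⟩
      obtain ⟨j, hj⟩ := (hVW a).mp ⟨x.symm r, hr⟩
      exact ⟨y j, by simp [hj]⟩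
    · rintro ⟨r, hr⟩
      obtain ⟨j, hj⟩ := (hVW a).mpr ⟨y.symm r, hr⟩
      exact ⟨x j, by simp [hj]⟩
  have hνeq : (fun r : Fin n => v (φ (x.symm r))) = (fun r : Fin n => w (φ (y.symm r))) :=
    strictMono_eq_of_image_eq (hmono_gen v x hxv) hν'mono himg
  have hνy : ∀ j, w (φ j) = ν (y j) := by
    intro j
    rw [hν, hνeq]
    simp
  -- coerced alignment facts
  have hv_in : ∀ j, ((v (φ j)) : ℕ) = ((ν (x j)) : ℕ) := fun j => congrArg Fin.val (hνx j)
  have hw_in : ∀ j, ((w (φ j)) : ℕ) = ((ν (y j)) : ℕ) := fun j => congrArg Fin.val (hνy j)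
  have hw_out : ∀ i, (∀ j, φ j ≠ i) → ((w i) : ℕ) = ((v i) : ℕ) :=
    fun i hi => congrArg Fin.val (hout i hi).symm
  -- the comparison transfer
  have hcmp : ∀ (U U' : Equiv.Perm (Fin m)) (z z' : Equiv.Perm (Fin n)),
      (∀ j, ((U (φ j)) : ℕ) = ((ν (z j)) : ℕ)) →
      (∀ i, (∀ j, φ j ≠ i) → ((U i) : ℕ) = ((v i) : ℕ)) →
      (∀ j, ((U' (φ j)) : ℕ) = ((ν (z' j)) : ℕ)) →
      (∀ i, (∀ j, φ j ≠ i) → ((U' i) : ℕ) = ((v i) : ℕ)) →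
      (bruhatLE U U' ↔ bruhatLE z z') := by
    intro U U' z z' h1 h2 h3 h4
    exact rankLE_aligned_iff φ hφ ν hνmono (fun i => (v i : ℕ)) _ _ (⇑z) (⇑z') h1 h2 h3 h4
  -- pattern inversion transfer for the decomposition lemma
  have hpat_gen : ∀ (V : Equiv.Perm (Fin m)) (X : Equiv.Perm (Fin n)),
      (∀ j k : Fin n, j < k → ((V (φ j) : ℕ) < V (φ k) ↔ (X j : ℕ) < X k)) →
      ∀ j k : Fin n, j < k →
        ((V (φ k) : ℕ) < (V (φ j) : ℕ) ↔ (X k : ℕ) < (X j : ℕ)) := by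
    intro V X hXV j k h
    have h1 := hXV j k h
    have h2 : (V (φ j) : ℕ) ≠ (V (φ k) : ℕ) := by
      intro hh
      exact h.ne (hφ.injective (V.injective (Fin.val_injective hh)))
    have h3 : (X j : ℕ) ≠ (X k : ℕ) := by
      intro hh
      exact h.ne (X.injective (Fin.val_injective hh))
    omega
  -- the K-count equality
  have hK : ∀ i₀ : Fin m, (∀ j, φ j ≠ i₀) →
      (Finset.univ.filter fun j : Fin n => ((w (φ j)) : ℕ) < ((w i₀) : ℕ)).card
        = (Finset.univ.filter fun j : Fin n => ((v (φ j)) : ℕ) < ((v i₀) : ℕ)).card := by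
    intro i₀ hi₀
    have hWc : ((w i₀) : ℕ) = ((v i₀) : ℕ) := congrArg Fin.val (hout i₀ hi₀).symm
    have eW : (Finset.univ.filter fun j : Fin n => ((w (φ j)) : ℕ) < ((w i₀) : ℕ))
        = (Finset.univ.filter fun j : Fin n => ((ν (y j)) : ℕ) < ((v i₀) : ℕ)) := by
      apply Finset.filter_congr
      intro j _
      rw [hw_in j, hWc]
    have eV : (Finset.univ.filter fun j : Fin n => ((v (φ j)) : ℕ) < ((v i₀) : ℕ))
        = (Finset.univ.filter fun j : Fin n => ((ν (x j)) : ℕ) < ((v i₀) : ℕ)) := by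
      apply Finset.filter_congr
      intro j _
      rw [hv_in j]
    rw [eW, eV, card_filter_perm y (fun r => ((ν r) : ℕ) < ((v i₀) : ℕ)),
      card_filter_perm x (fun r => ((ν r) : ℕ) < ((v i₀) : ℕ))]
  -- pointwise mixed-inversion equality
  have hLpt := L_pointwise φ hφ (fun i => ((v i) : ℕ)) (fun i => ((w i) : ℕ))
    (fun i => ((x i) : ℕ)) (fun i => ((y i) : ℕ))
    (fun a b hab => v.injective (Fin.val_injective hab))
    (fun a b hab => w.injective (Fin.val_injective hab))
    (fun i hi => congrArg Fin.val (hout i hi))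
    hvw hlen (hpat_gen v x hxv) (hpat_gen w y hyw) hK
  -- outside agreement for any u in the interval
  have hsq : ∀ u : Equiv.Perm (Fin m), bruhatLE v u → bruhatLE u w →
      ∀ i : Fin m, (∀ j, φ j ≠ i) → u i = v i := by
    intro u h1 h2 i hi
    exact squeeze_out φ hφ v w u hout h1 h2 hLpt i hi
  -- the patched permutation
  have hνnotv : ∀ (r : Fin n) (i : Fin m), (∀ j, φ j ≠ i) → ν r ≠ v i := by
    intro r i hi hcon
    rw [hν] at hcon
    exact hi (x.symm r) (v.injective hcon)
  have hδinj : ∀ z : Equiv.Perm (Fin n),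
      Function.Injective (patchFun φ v (fun j => ν (z j))) := by
    intro z a b hab
    by_cases ha : ∃ j, φ j = a <;> by_cases hb : ∃ j, φ j = b
    · obtain ⟨ja, rfl⟩ := ha
      obtain ⟨jb, rfl⟩ := hb
      rw [patchFun_mem hφ.injective, patchFun_mem hφ.injective] at hab
      exact congrArg φ (z.injective (hνmono.injective hab))
    · obtain ⟨ja, rfl⟩ := ha
      push_neg at hb
      rw [patchFun_mem hφ.injective, patchFun_not hb] at hab
      exact absurd hab (hνnotv _ _ hb)
    · obtain ⟨jb, rfl⟩ := hb
      push_neg at ha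
      rw [patchFun_mem hφ.injective, patchFun_not ha] at hab
      exact absurd hab.symm (hνnotv _ _ ha)
    · push_neg at ha hb
      rw [patchFun_not ha, patchFun_not hb] at hab
      exact v.injective hab
  let δ : Equiv.Perm (Fin n) → Equiv.Perm (Fin m) := fun z =>
    Equiv.ofBijective _ (Finite.injective_iff_bijective.mp (hδinj z))
  have hδ_apply : ∀ z i, δ z i = patchFun φ v (fun j => ν (z j)) i := fun z i => rfl
  have hδ_in : ∀ z j, δ z (φ j) = ν (z j) := fun z j => by
    rw [hδ_apply, patchFun_mem hφ.injective]
  have hδ_out : ∀ z i, (∀ j, φ j ≠ i) → δ z i = v i := fun z i hi => by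
    rw [hδ_apply, patchFun_not hi]
  -- δ maps the interval to the interval
  have memδ : ∀ z : Equiv.Perm (Fin n), bruhatLE x z ∧ bruhatLE z y →
      bruhatLE v (δ z) ∧ bruhatLE (δ z) w := by
    intro z hz
    constructor
    · exact (hcmp v (δ z) x z hv_in (fun i _ => rfl)
        (fun j => congrArg Fin.val (hδ_in z j))
        (fun i hi => congrArg Fin.val (hδ_out z i hi))).mpr hz.1
    · exact (hcmp (δ z) w z y (fun j => congrArg Fin.val (hδ_in z j))
        (fun i hi => congrArg Fin.val (hδ_out z i hi)) hw_in hw_out).mpr hz.2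
  let F : {z : Equiv.Perm (Fin n) // bruhatLE x z ∧ bruhatLE z y} →
      {z : Equiv.Perm (Fin m) // bruhatLE v z ∧ bruhatLE z w} :=
    fun a => ⟨δ a.1, memδ a.1 a.2⟩
  have hFinj : Function.Injective F := by
    intro a b hab
    have hδab : δ a.1 = δ b.1 := congrArg Subtype.val hab
    apply Subtype.ext
    apply Equiv.ext
    intro j
    have h2 : ν (a.1 j) = ν (b.1 j) := by
      rw [← hδ_in a.1 j, ← hδ_in b.1 j, hδab]
    exact hνmono.injective h2
  have hFsurj : Function.Surjective F := by
    rintro ⟨u, hu⟩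
    have huout : ∀ i, (∀ j, φ j ≠ i) → u i = v i := fun i hi => hsq u hu.1 hu.2 i hi
    have hex : ∀ j, ∃ r, ν r = u (φ j) := by
      intro j
      suffices hk : ∃ k, v (φ k) = u (φ j) by
        obtain ⟨k, hk⟩ := hk
        exact ⟨x k, by rw [← hνx k, hk]⟩
      by_contra hcon
      push_neg at hcon
      have hnφ : ∀ k, φ k ≠ v.symm (u (φ j)) := by
        intro k hk
        exact hcon k (by rw [hk]; simp)
      have h2 := huout (v.symm (u (φ j))) hnφ
      have h3 : u (v.symm (u (φ j))) = u (φ j) := by rw [h2]; simp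
      exact hnφ j (u.injective h3).symm
    choose r hr using hex
    have hrinj : Function.Injective r := by
      intro a b hab
      have h2 : u (φ a) = u (φ b) := by rw [← hr a, ← hr b, hab]
      exact hφ.injective (u.injective h2)
    let zp : Equiv.Perm (Fin n) := Equiv.ofBijective r (Finite.injective_iff_bijective.mp hrinj)
    have hzp : ∀ j, ν (zp j) = u (φ j) := hr
    have hmemz : bruhatLE x zp ∧ bruhatLE zp y := by
      constructor
      · exact (hcmp v u x zp hv_in (fun i _ => rfl)
          (fun j => (congrArg Fin.val (hzp j)).symm)
          (fun i hi => congrArg Fin.val (huout i hi))).mp hu.1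
      · exact (hcmp u w zp y (fun j => (congrArg Fin.val (hzp j)).symm)
          (fun i hi => congrArg Fin.val (huout i hi)) hw_in hw_out).mp hu.2
    refine ⟨⟨zp, hmemz⟩, ?_⟩
    apply Subtype.ext
    show δ zp = u
    apply Equiv.ext
    intro i
    by_cases hi : ∃ j, φ j = i
    · obtain ⟨j, rfl⟩ := hi
      rw [hδ_in zp j, hzp j]
    · push_neg at hi
      exact (hδ_out zp i hi).trans (huout i hi).symm
  refine ⟨Equiv.ofBijective F ⟨hFinj, hFsurj⟩, ?_⟩
  intro a b
  show bruhatLE a.1 b.1 ↔ bruhatLE (F a).1 (F b).1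
  exact (hcmp (δ a.1) (δ b.1) a.1 b.1
    (fun j => congrArg Fin.val (hδ_in a.1 j))
    (fun i hi => congrArg Fin.val (hδ_out a.1 i hi))
    (fun j => congrArg Fin.val (hδ_in b.1 j))
    (fun i hi => congrArg Fin.val (hδ_out b.1 i hi))).symm
end

section
/- Let x = [2,1,6,5,4,3,8,7] and y = [6,2,8,4,5,1,7,3] in S_8, and let v = [8,9,5,6,2,1,10,7,4,3,12,11] and w = [8,9,5,6,10,2,12,4,7,1,11,3] in S_12. Then P(v) = P(w), v(i) = w(i) for i ≤ 4, the pattern of v in the last 8 positions is x, and the pattern of w in the last 8 positions is y. -/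
/-- Example 2.5 of Lanini–McNamara: for `x = [21654387]`-type data in `S_8` and the
displayed `v, w ∈ S_12`, one has `P(v) = P(w)`, `v` and `w` agree in the first four
positions, and the patterns of `v`, `w` in the last eight positions are `x`, `y`. -/
theorem kashiwara_saito_example (x y : Equiv.Perm (Fin 8)) (v w : Equiv.Perm (Fin 12))
    (hx : oneLine x = [2, 1, 6, 5, 4, 3, 8, 7]) (hy : oneLine y = [6, 2, 8, 4, 5, 1, 7, 3])
    (hv : oneLine v = [8, 9, 5, 6, 2, 1, 10, 7, 4, 3, 12, 11])
    (hw : oneLine w = [8, 9, 5, 6, 10, 2, 12, 4, 7, 1, 11, 3]) :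
    RSP v = RSP w ∧
    (∀ i : Fin 12, (i : ℕ) < 4 → v i = w i) ∧
    (∀ i j : Fin 8, i < j →
      ((v ⟨4 + i, by have := i.isLt; omega⟩ : ℕ) < (v ⟨4 + j, by have := j.isLt; omega⟩ : ℕ) ↔
        (x i : ℕ) < x j)) ∧
    (∀ i j : Fin 8, i < j →
      ((w ⟨4 + i, by have := i.isLt; omega⟩ : ℕ) < (w ⟨4 + j, by have := j.isLt; omega⟩ : ℕ) ↔
        (y i : ℕ) < y j)) := by
  have hval : ∀ {n} {u : Equiv.Perm (Fin n)} {L : List ℕ}, oneLine u = L → ∀ i : Fin n,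
      (u i : ℕ) + 1 = L.getD i 0 := by
    intro n u L h i
    subst h
    simp [oneLine, List.getD_eq_getElem?_getD, List.getElem?_ofFn]
  refine ⟨?_, ?_, ?_, ?_⟩
  · show Psymb (oneLine v) = Psymb (oneLine w)
    rw [hv, hw]
    decide
  · intro i hi
    have h1 := hval hv i
    have h2 := hval hw i
    apply Fin.ext
    interval_cases h : (i : ℕ) <;> simp [h] at h1 h2 <;> omega
  · intro i j hij
    have ha := hval hv ⟨4 + i, by have := i.isLt; omega⟩
    have hb := hval hv ⟨4 + j, by have := j.isLt; omega⟩
    simp only [Fin.val_mk] at ha hb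
    have hc := hval hx i
    have hd := hval hx j
    have key : ∀ i j : Fin 8,
        (([8, 9, 5, 6, 2, 1, 10, 7, 4, 3, 12, 11] : List ℕ).getD (4 + i) 0 <
          ([8, 9, 5, 6, 2, 1, 10, 7, 4, 3, 12, 11] : List ℕ).getD (4 + j) 0 ↔
        ([2, 1, 6, 5, 4, 3, 8, 7] : List ℕ).getD i 0 <
          ([2, 1, 6, 5, 4, 3, 8, 7] : List ℕ).getD j 0) := by decide
    have := key i j
    omega
  · intro i j hij
    have ha := hval hw ⟨4 + i, by have := i.isLt; omega⟩
    have hb := hval hw ⟨4 + j, by have := j.isLt; omega⟩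
    simp only [Fin.val_mk] at ha hb
    have hc := hval hy i
    have hd := hval hy j
    have key : ∀ i j : Fin 8,
        (([8, 9, 5, 6, 10, 2, 12, 4, 7, 1, 11, 3] : List ℕ).getD (4 + i) 0 <
          ([8, 9, 5, 6, 10, 2, 12, 4, 7, 1, 11, 3] : List ℕ).getD (4 + j) 0 ↔
        ([6, 2, 8, 4, 5, 1, 7, 3] : List ℕ).getD i 0 <
          ([6, 2, 8, 4, 5, 1, 7, 3] : List ℕ).getD j 0) := by decide
    have := key i j
    omega
end

section
/- Let x ∈ S_n, 0 ≤ k ≤ n, t ≥ 1, and define x' ∈ S_{n+t} as in equation (2.1): x'(i) = k+i for i ≤ t, x'(i) = x(i-t) if i > t and x(i-t) ≤ k, x'(i) = x(i-t)+t otherwise. Then the P-symbol of x' equals the tableau obtained from P(x) by first adding t to every entry of P(x) greater than k, and then column-inserting the values k+t, k+t-1, ..., k+1 in that order. -/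
/-- Add `t` to every entry of the tableau greater than `k`. -/
def shiftGT (k t : ℕ) (T : List (List ℕ)) : List (List ℕ) :=
  T.map (List.map fun e => if k < e then e + t else e)

/-- The monotone shift map. -/
def phiShift (k t : ℕ) (e : ℕ) : ℕ := if k < e then e + t else e

lemma phiShift_lt_iff (k t a b : ℕ) : phiShift k t a < phiShift k t b ↔ a < b := by
  unfold phiShift; split <;> split <;> omega

lemma phiShift_inj (k t a b : ℕ) (h : phiShift k t a = phiShift k t b) : a = b := by
  unfold phiShift at h; split at h <;> split at h <;> omega

lemma insertCol_map_phi (k t : ℕ) (v : ℕ) (T : List (List ℕ)) :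
    insertCol (phiShift k t v) (T.map (List.map (phiShift k t))) =
      (insertCol v T).map (List.map (phiShift k t)) := by
  induction T generalizing v with
  | nil => simp [insertCol]
  | cons c cs ih =>
    simp only [List.map_cons, insertCol]
    rw [List.find?_map]
    have hp : ((fun x => decide (phiShift k t v < x)) ∘ phiShift k t) =
        fun x => decide (v < x) := by
      funext y; simp [phiShift_lt_iff]
    rw [hp]
    cases hfind : c.find? (fun x => decide (v < x)) with
    | none => simp
    | some w =>
      simp only [Option.map_some]
      rw [ih]
      congr 1
      rw [List.map_map, List.map_map]
      apply List.map_congr_left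
      intro y _
      simp only [Function.comp_apply]
      by_cases h : y = w
      · simp [h]
      · have hne : phiShift k t y ≠ phiShift k t w := fun hc => h (phiShift_inj k t _ _ hc)
        simp [h, hne]

lemma foldl_insert_map_phi (k t : ℕ) (l : List ℕ) (T : List (List ℕ)) :
    (l.map (phiShift k t)).foldl (fun U v => insertCol v U) (T.map (List.map (phiShift k t))) =
      (l.foldl (fun U v => insertCol v U) T).map (List.map (phiShift k t)) := by
  induction l generalizing T with
  | nil => simp
  | cons a l ih =>
    simp only [List.map_cons, List.foldl_cons, insertCol_map_phi]
    exact ih _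

lemma rspair_fst (l : List (ℕ × ℕ)) (P Q : List (List ℕ)) :
    (l.foldl (fun PQ p =>
      let P' := insertCol p.2 PQ.1
      (P', placeAt (p.1 + 1) (diffIdx (shapeOf PQ.1) (shapeOf P')) PQ.2)) (P, Q)).1 =
      l.foldl (fun U p => insertCol p.2 U) P := by
  induction l generalizing P Q with
  | nil => rfl
  | cons a l ih => exact ih _ _

lemma foldl_enumFrom_snd (g : List (List ℕ) → ℕ → List (List ℕ)) (l : List ℕ) :
    ∀ (i : ℕ) (P : List (List ℕ)),
      ((List.zipIdx l i).map Prod.swap).foldl (fun U p => g U p.2) P = l.foldl g P := by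
  induction l with
  | nil => intros; rfl
  | cons a l ih => intro i P; simpa [List.zipIdx_cons] using ih (i + 1) (g P a)

lemma psymb_eq_foldl (w : List ℕ) :
    Psymb w = w.reverse.foldl (fun U v => insertCol v U) [] := by
  unfold Psymb RSpair
  rw [rspair_fst]
  rw [show w.reverse.zipIdx.map Prod.swap = (List.zipIdx w.reverse 0).map Prod.swap from rfl]
  simpa using foldl_enumFrom_snd (fun U v => insertCol v U) w.reverse 0 []

lemma word_eq_aux (n t k : ℕ) (x : Equiv.Perm (Fin n)) :
    (List.ofFn fun i => primeMap n t k (fun j => (x j : ℕ)) i + 1) =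
      (List.ofFn fun i : Fin t => k + (i : ℕ) + 1) ++ (oneLine x).map (phiShift k t) := by
  apply List.ext_getElem
  · simp [oneLine, Nat.add_comm]
  · intro i h1 h2
    simp only [List.length_ofFn] at h1
    rw [List.getElem_ofFn, List.getElem_append]
    simp only [List.length_ofFn]
    unfold primeMap
    split
    · rename_i hit
      simp
    · rename_i hit
      simp only [List.getElem_map, oneLine, List.getElem_ofFn]
      unfold phiShift
      split <;> split <;> omega

lemma rev_first (k t : ℕ) :
    (List.ofFn fun i : Fin t => k + (i : ℕ) + 1).reverse =
      (List.range t).map (fun j => k + t - j) := by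
  apply List.ext_getElem
  · simp
  · intro i h1 h2
    simp only [List.length_reverse, List.length_ofFn] at h1
    rw [List.getElem_reverse, List.getElem_ofFn, List.getElem_map, List.getElem_range]
    simp only [List.length_ofFn]
    omega

/-- The `P`-symbol of the permutation `x'` of equation (2.1) is obtained from `P(x)` by
adding `t` to every entry greater than `k` and then column inserting
`k + t, k + t - 1, …, k + 1` in that order. -/
theorem psymbol_of_primeMap (n t k : ℕ) (ht : 1 ≤ t) (hk : k ≤ n)
    (x : Equiv.Perm (Fin n)) :
    Psymb (List.ofFn fun i => primeMap n t k (fun j => (x j : ℕ)) i + 1) =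
      ((List.range t).map fun j => k + t - j).foldl (fun U v => insertCol v U)
        (shiftGT k t (RSP x)) := by
  rw [psymb_eq_foldl, word_eq_aux n t k x, List.reverse_append, List.foldl_append,
    ← List.map_reverse]
  have h1 : ((oneLine x).reverse.map (phiShift k t)).foldl (fun U v => insertCol v U) [] =
      shiftGT k t (RSP x) := by
    have h := foldl_insert_map_phi k t (oneLine x).reverse []
    simp only [List.map_nil] at h
    rw [h, RSP, psymb_eq_foldl]
    rfl
  rw [h1, rev_first]
end

section
/- Let x, y ∈ S_n and define x', y' ∈ S_{n+t} by equation (2.1) with the same parameters k and t (with x'(i) = y'(i) = k+i for i ≤ t). Then x ≤ y in Bruhat order if and only if x' ≤ y' in Bruhat order. -/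
lemma prime_cond (n t k q : ℕ) (f : Fin n → ℕ) (i : Fin (n + t)) (h : t ≤ (i : ℕ))
    (hi : (i : ℕ) - t < n) :
    (q ≤ primeMap n t k f i) ↔ ((if q ≤ k then q else max k (q - t)) ≤ f ⟨(i : ℕ) - t, hi⟩) := by
  simp only [primeMap, dif_neg (not_lt.2 h)]
  split_ifs <;> omega

lemma count_split (n t k p q : ℕ) (f : Fin n → ℕ) :
    (Finset.univ.filter fun i : Fin (n + t) => (i : ℕ) ≤ p ∧ q ≤ primeMap n t k f i).card
      = (Finset.univ.filter fun i : Fin (n + t) =>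
            ((i : ℕ) ≤ p ∧ q ≤ primeMap n t k f i) ∧ (i : ℕ) < t).card
        + (Finset.univ.filter fun j : Fin n =>
            t + (j : ℕ) ≤ p ∧ (if q ≤ k then q else max k (q - t)) ≤ f j).card := by
  rw [← Finset.card_filter_add_card_filter_not
    (s := Finset.univ.filter fun i : Fin (n + t) => (i : ℕ) ≤ p ∧ q ≤ primeMap n t k f i)
    (p := fun i => (i : ℕ) < t)]
  simp only [Finset.filter_filter]
  congr 1
  refine Finset.card_bij'
    (fun i hi => (⟨(i : ℕ) - t, by
      simp only [Finset.mem_filter] at hi; omega⟩ : Fin n))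
    (fun j _ => (⟨t + (j : ℕ), by have := j.isLt; omega⟩ : Fin (n + t))) ?_ ?_ ?_ ?_
  · intro i hi
    simp only [Finset.mem_filter, Finset.mem_univ, true_and] at hi ⊢
    obtain ⟨⟨h1, h2⟩, h3⟩ := hi
    rw [prime_cond n t k q f i (by omega) (by omega)] at h2
    exact ⟨by first | omega | (simp only [Fin.val_mk]; omega), h2⟩
  · intro j hj
    simp only [Finset.mem_filter, Finset.mem_univ, true_and] at hj ⊢
    obtain ⟨h1, h2⟩ := hj
    have hjn := j.isLt
    have hle : t ≤ ((⟨t + (j : ℕ), by omega⟩ : Fin (n + t)) : ℕ) := by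
      first | omega | (simp only [Fin.val_mk]; omega)
    refine ⟨⟨by first | omega | (simp only [Fin.val_mk]; omega), ?_⟩, by first | omega | (simp only [Fin.val_mk]; omega)⟩
    rw [prime_cond n t k q f _ hle (by first | omega | (simp only [Fin.val_mk]; omega))]
    have hje : (⟨((⟨t + (j : ℕ), by omega⟩ : Fin (n + t)) : ℕ) - t,
        by first | omega | (simp only [Fin.val_mk]; omega)⟩ : Fin n) = j := by
      ext; first | omega | (simp only [Fin.val_mk]; omega)
    rw [hje]
    exact h2
  · intro i hi
    simp only [Finset.mem_filter, Finset.mem_univ, true_and] at hi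
    ext
    simp only [Fin.val_mk]
    omega
  · intro j hj
    ext
    simp only [Fin.val_mk]
    omega

/-- The map of equation (2.1) preserves and reflects the Bruhat order:
`x ≤ y` iff `x' ≤ y'`. -/
theorem primeMap_bruhat_iff (n t k : ℕ) (ht : 1 ≤ t) (hk : k ≤ n)
    (x y : Equiv.Perm (Fin n)) :
    bruhatLE x y ↔
      rankLE (primeMap n t k fun j => (x j : ℕ)) (primeMap n t k fun j => (y j : ℕ)) := by
  constructor
  · intro hxy p q
    rw [count_split, count_split]
    refine Nat.add_le_add ?_ ?_
    · apply le_of_eq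
      congr 1
      apply Finset.filter_congr
      intro i _
      by_cases hit : (i : ℕ) < t
      · simp only [primeMap, dif_pos hit]
      · simp [hit]
    · by_cases hpt : t ≤ p
      · have e1 : ∀ g : Fin n → ℕ, (Finset.univ.filter fun j : Fin n =>
            t + (j : ℕ) ≤ p ∧ (if q ≤ k then q else max k (q - t)) ≤ g j)
            = Finset.univ.filter fun j : Fin n =>
            (j : ℕ) ≤ p - t ∧ (if q ≤ k then q else max k (q - t)) ≤ g j := by
          intro g
          apply Finset.filter_congr; intro j _
          constructor <;> rintro ⟨h1, h2⟩ <;> exact ⟨by omega, h2⟩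
        rw [e1, e1]
        exact hxy (p - t) (if q ≤ k then q else max k (q - t))
      · have e1 : ∀ g : Fin n → ℕ, (Finset.univ.filter fun j : Fin n =>
            t + (j : ℕ) ≤ p ∧ (if q ≤ k then q else max k (q - t)) ≤ g j) = ∅ := by
          intro g
          apply Finset.filter_false_of_mem
          intro j _
          rintro ⟨h1, _⟩
          omega
        rw [e1, e1]
  · intro h p q
    have hq : (if (if q ≤ k then q else q + t) ≤ k then (if q ≤ k then q else q + t)
        else max k ((if q ≤ k then q else q + t) - t)) = q := by
      split_ifs <;> omega
    have key := h (p + t) (if q ≤ k then q else q + t)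
    rw [count_split, count_split] at key
    have eA : (Finset.univ.filter fun i : Fin (n + t) =>
        ((i : ℕ) ≤ p + t ∧ (if q ≤ k then q else q + t)
          ≤ primeMap n t k (fun j => (x j : ℕ)) i) ∧ (i : ℕ) < t).card
        = (Finset.univ.filter fun i : Fin (n + t) =>
        ((i : ℕ) ≤ p + t ∧ (if q ≤ k then q else q + t)
          ≤ primeMap n t k (fun j => (y j : ℕ)) i) ∧ (i : ℕ) < t).card := by
      congr 1
      apply Finset.filter_congr
      intro i _
      by_cases hit : (i : ℕ) < t
      · simp only [primeMap, dif_pos hit]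
      · simp [hit]
    rw [eA] at key
    have hB := Nat.le_of_add_le_add_left key
    have eB : ∀ g : Fin n → ℕ, (Finset.univ.filter fun j : Fin n =>
        t + (j : ℕ) ≤ p + t ∧ (if (if q ≤ k then q else q + t) ≤ k
          then (if q ≤ k then q else q + t)
          else max k ((if q ≤ k then q else q + t) - t)) ≤ g j)
        = Finset.univ.filter fun j : Fin n => (j : ℕ) ≤ p ∧ q ≤ g j := by
      intro g
      apply Finset.filter_congr
      intro j _
      rw [hq]
      constructor <;> rintro ⟨h1, h2⟩ <;> exact ⟨by omega, h2⟩
    rw [eB, eB] at hB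
    exact hB
end
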